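/- arXiv:1603.01535 — 8 statements merged into one kernel-verified Lean document; each statement's English description precedes it below -/
import Mathlib

section
/- Let T : ℓ∞²(ℝ) × ℓ∞²(ℝ) → ℝ be a nonzero bilinear form, T(x,y) = Σ_{i,j=1}^{2} a_{ij}x_iy_j with a_{ij} ∈ ℝ. Then (Σ_{i,j=1}^{2} |a_{ij}|^{4/3})^{3/4} = √2 · ‖T‖ holds if and only if there exists α ∈ ℝ \ {0} such that T(x,y) = α(x₁y₁ + x₁y₂ + x₂y₁ − x₂y₂), or T(x,y) = α(x₁y₁ + x₁y₂ − x₂y₁ + x₂y₂), or T(x,y) = α(x₁y₁ − x₁y₂ + x₂y₁ + x₂y₂), or T(x,y) = α(−x₁y₁ + x₁y₂ + x₂y₁ + x₂y₂). -/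
open Real

/-- |a| + |b| ≤ max |a+b| |a-b| -/
lemma lw_abs_add_abs_le_max (a b : ℝ) : |a| + |b| ≤ max |a + b| |a - b| := by
  rcases le_total 0 a with ha | ha <;> rcases le_total 0 b with hb | hb
  · have h : |a| + |b| = |a + b| := by
      rw [abs_of_nonneg ha, abs_of_nonneg hb, abs_of_nonneg (by linarith)]
    rw [h]; exact le_max_left _ _
  · have h : |a| + |b| = |a - b| := by
      rw [abs_of_nonneg ha, abs_of_nonpos hb, abs_of_nonneg (by linarith)]; ring
    rw [h]; exact le_max_right _ _
  · have h : |a| + |b| = |a - b| := by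
      rw [abs_of_nonpos ha, abs_of_nonneg hb, abs_of_nonpos (by linarith)]; ring
    rw [h]; exact le_max_right _ _
  · have h : |a| + |b| = |a + b| := by
      rw [abs_of_nonpos ha, abs_of_nonpos hb, abs_of_nonpos (by linarith)]; ring
    rw [h]; exact le_max_left _ _

/-- Khintchine-type inequality for two reals. -/
lemma lw_khin (a b : ℝ) : Real.sqrt 2 * Real.sqrt (a ^ 2 + b ^ 2) ≤ |a + b| + |a - b| := by
  have h1 : Real.sqrt 2 * Real.sqrt (a ^ 2 + b ^ 2) = Real.sqrt (2 * (a ^ 2 + b ^ 2)) := by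
    rw [← Real.sqrt_mul (by norm_num)]
  have h2 : 2 * (a ^ 2 + b ^ 2) ≤ (|a + b| + |a - b|) ^ 2 := by
    have e : (|a + b| + |a - b|) ^ 2 = (a + b) ^ 2 + (a - b) ^ 2 + 2 * (|a + b| * |a - b|) := by
      rw [add_sq, sq_abs, sq_abs]; ring
    have : 0 ≤ |a + b| * |a - b| := by positivity
    nlinarith
  rw [h1]
  calc Real.sqrt (2 * (a ^ 2 + b ^ 2)) ≤ Real.sqrt ((|a + b| + |a - b|) ^ 2) :=
        Real.sqrt_le_sqrt h2
    _ = |a + b| + |a - b| := Real.sqrt_sq (by positivity)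

/-- Equality in Khintchine forces equal moduli. -/
lemma lw_khin_eq (a b : ℝ) (h : Real.sqrt 2 * Real.sqrt (a ^ 2 + b ^ 2) = |a + b| + |a - b|) :
    |a| = |b| := by
  have h1 : (Real.sqrt 2 * Real.sqrt (a ^ 2 + b ^ 2)) ^ 2 = 2 * (a ^ 2 + b ^ 2) := by
    rw [mul_pow, Real.sq_sqrt (by norm_num : (0:ℝ) ≤ 2), Real.sq_sqrt (by positivity)]
  have h2 : (|a + b| + |a - b|) ^ 2 = 2 * (a ^ 2 + b ^ 2) + 2 * |(a + b) * (a - b)| := by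
    rw [add_sq, sq_abs, sq_abs, abs_mul]; ring
  have h3 : |(a + b) * (a - b)| = 0 := by
    have := congrArg (· ^ 2) h
    rw [h1, h2] at this
    linarith
  have h4 : a ^ 2 = b ^ 2 := by
    have : (a + b) * (a - b) = 0 := abs_eq_zero.mp h3
    nlinarith
  rw [← Real.sqrt_sq_eq_abs, ← Real.sqrt_sq_eq_abs, h4]

/-- x^p + y^p ≤ (x+y)^p for p ≥ 1. -/
lemma lw_add_rpow_le (x y p : ℝ) (hx : 0 ≤ x) (hy : 0 ≤ y) (hp : 1 ≤ p) :
    x ^ p + y ^ p ≤ (x + y) ^ p := by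
  rcases eq_or_lt_of_le hx with h | hx0
  · rw [← h, Real.zero_rpow (by linarith), zero_add, zero_add]
  rcases eq_or_lt_of_le hy with h | hy0
  · rw [← h, Real.zero_rpow (by linarith), add_zero, add_zero]
  have hxy : 0 < x + y := by linarith
  have ex : x ^ p = x * x ^ (p - 1) := by
    have : x ^ ((1:ℝ) + (p-1)) = x ^ (1:ℝ) * x ^ (p-1) := Real.rpow_add hx0 1 (p-1)
    rw [Real.rpow_one] at this
    rw [← this]; norm_num
  have ey : y ^ p = y * y ^ (p - 1) := by
    have : y ^ ((1:ℝ) + (p-1)) = y ^ (1:ℝ) * y ^ (p-1) := Real.rpow_add hy0 1 (p-1)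
    rw [Real.rpow_one] at this
    rw [← this]; norm_num
  have hx1 : x ^ (p - 1) ≤ (x + y) ^ (p - 1) :=
    Real.rpow_le_rpow hx (by linarith) (by linarith)
  have hy1 : y ^ (p - 1) ≤ (x + y) ^ (p - 1) :=
    Real.rpow_le_rpow hy (by linarith) (by linarith)
  have exy : (x + y) ^ p = (x + y) * (x + y) ^ (p - 1) := by
    have : (x+y) ^ ((1:ℝ) + (p-1)) = (x+y) ^ (1:ℝ) * (x+y) ^ (p-1) := Real.rpow_add hxy 1 (p-1)
    rw [Real.rpow_one] at this
    rw [← this]; norm_num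
  calc x ^ p + y ^ p = x * x ^ (p-1) + y * y ^ (p-1) := by rw [ex, ey]
    _ ≤ x * (x+y) ^ (p-1) + y * (x+y) ^ (p-1) := by
        gcongr
    _ = (x + y) ^ p := by rw [exy]; ring

lemma lw_cell (a r c R Q : ℝ) (hr : 0 < r) (hc : 0 < c) (hR : 0 < R) (hQ : 0 < Q) :
    |a| ^ ((4:ℝ)/3)
      ≤ (R*Q) ^ ((2:ℝ)/3) * ((a^2/(r*R) + a^2/(c*Q) + (r*c)/(R*Q))/3) := by
  set p₁ := a^2/(r*R) with hp₁
  set p₂ := a^2/(c*Q) with hp₂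
  set p₃ := (r*c)/(R*Q) with hp₃
  have h1 : (0:ℝ) ≤ p₁ := by positivity
  have h2 : (0:ℝ) ≤ p₂ := by positivity
  have h3 : (0:ℝ) ≤ p₃ := by positivity
  have hg := Real.geom_mean_le_arith_mean3_weighted (by norm_num : (0:ℝ) ≤ 1/3)
    (by norm_num : (0:ℝ) ≤ 1/3) (by norm_num : (0:ℝ) ≤ 1/3) h1 h2 h3
    (by norm_num : (1:ℝ)/3 + 1/3 + 1/3 = 1)
  have key : (R*Q) ^ ((2:ℝ)/3) * (p₁ ^ ((1:ℝ)/3) * p₂ ^ ((1:ℝ)/3) * p₃ ^ ((1:ℝ)/3))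
      = |a| ^ ((4:ℝ)/3) := by
    rw [← Real.mul_rpow h1 h2, ← Real.mul_rpow (by positivity) h3]
    have e1 : (R*Q) ^ ((2:ℝ)/3) = ((R*Q)^2) ^ ((1:ℝ)/3) := by
      rw [← Real.rpow_natCast (R*Q) 2, ← Real.rpow_mul (by positivity)]
      norm_num
    rw [e1, ← Real.mul_rpow (by positivity) (by positivity)]
    have e2 : (R*Q)^2 * (p₁ * p₂ * p₃) = a^4 := by
      rw [hp₁, hp₂, hp₃]; field_simp
    rw [e2]
    rw [show a^4 = |a|^4 from by rw [← abs_pow, abs_of_nonneg (by positivity)],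
      ← Real.rpow_natCast |a| 4, ← Real.rpow_mul (abs_nonneg a)]
    norm_num
  calc |a| ^ ((4:ℝ)/3)
      = (R*Q) ^ ((2:ℝ)/3) * (p₁ ^ ((1:ℝ)/3) * p₂ ^ ((1:ℝ)/3) * p₃ ^ ((1:ℝ)/3)) := key.symm
    _ ≤ (R*Q) ^ ((2:ℝ)/3) * (1/3*p₁ + 1/3*p₂ + 1/3*p₃) := by
        have : (0:ℝ) ≤ (R*Q) ^ ((2:ℝ)/3) := by positivity
        exact mul_le_mul_of_nonneg_left hg this
    _ = (R*Q) ^ ((2:ℝ)/3) * ((p₁ + p₂ + p₃)/3) := by ring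

lemma lw_holder (A B C D : ℝ) (hAB : 0 < A^2+B^2) (hCD : 0 < C^2+D^2)
    (hAC : 0 < A^2+C^2) (hBD : 0 < B^2+D^2) :
    |A|^((4:ℝ)/3)+|B|^((4:ℝ)/3)+|C|^((4:ℝ)/3)+|D|^((4:ℝ)/3)
      ≤ ((Real.sqrt (A^2+B^2) + Real.sqrt (C^2+D^2))
          * (Real.sqrt (A^2+C^2) + Real.sqrt (B^2+D^2))) ^ ((2:ℝ)/3) := by
  set r1 := Real.sqrt (A^2+B^2) with hr1d
  set r2 := Real.sqrt (C^2+D^2) with hr2d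
  set c1 := Real.sqrt (A^2+C^2) with hc1d
  set c2 := Real.sqrt (B^2+D^2) with hc2d
  have hr1 : 0 < r1 := Real.sqrt_pos.mpr hAB
  have hr2 : 0 < r2 := Real.sqrt_pos.mpr hCD
  have hc1 : 0 < c1 := Real.sqrt_pos.mpr hAC
  have hc2 : 0 < c2 := Real.sqrt_pos.mpr hBD
  have er1 : r1^2 = A^2+B^2 := Real.sq_sqrt hAB.le
  have er2 : r2^2 = C^2+D^2 := Real.sq_sqrt hCD.le
  have ec1 : c1^2 = A^2+C^2 := Real.sq_sqrt hAC.le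
  have ec2 : c2^2 = B^2+D^2 := Real.sq_sqrt hBD.le
  set R := r1 + r2 with hRd
  set Q := c1 + c2 with hQd
  have hR : 0 < R := by positivity
  have hQ : 0 < Q := by positivity
  have cA := lw_cell A r1 c1 R Q hr1 hc1 hR hQ
  have cB := lw_cell B r1 c2 R Q hr1 hc2 hR hQ
  have cC := lw_cell C r2 c1 R Q hr2 hc1 hR hQ
  have cD := lw_cell D r2 c2 R Q hr2 hc2 hR hQ
  have hsum : ((A^2/(r1*R) + A^2/(c1*Q) + (r1*c1)/(R*Q))/3)
      + ((B^2/(r1*R) + B^2/(c2*Q) + (r1*c2)/(R*Q))/3)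
      + ((C^2/(r2*R) + C^2/(c1*Q) + (r2*c1)/(R*Q))/3)
      + ((D^2/(r2*R) + D^2/(c2*Q) + (r2*c2)/(R*Q))/3) = 1 := by
    have g1 : A^2/(r1*R) + B^2/(r1*R) = r1/R := by
      rw [← add_div, ← er1, sq]; exact mul_div_mul_left _ _ hr1.ne'
    have g2 : C^2/(r2*R) + D^2/(r2*R) = r2/R := by
      rw [← add_div, ← er2, sq]; exact mul_div_mul_left _ _ hr2.ne'
    have g3 : A^2/(c1*Q) + C^2/(c1*Q) = c1/Q := by
      rw [← add_div, ← ec1, sq]; exact mul_div_mul_left _ _ hc1.ne'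
    have g4 : B^2/(c2*Q) + D^2/(c2*Q) = c2/Q := by
      rw [← add_div, ← ec2, sq]; exact mul_div_mul_left _ _ hc2.ne'
    have g5 : (r1*c1)/(R*Q) + (r1*c2)/(R*Q) + (r2*c1)/(R*Q) + (r2*c2)/(R*Q) = 1 := by
      rw [← add_div, ← add_div, ← add_div,
        show r1*c1+r1*c2+r2*c1+r2*c2 = R*Q from by rw [hRd, hQd]; ring]
      exact div_self (by positivity)
    have g6 : r1/R + r2/R = 1 := by
      rw [← add_div, ← hRd]; exact div_self hR.ne'
    have g7 : c1/Q + c2/Q = 1 := by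
      rw [← add_div, ← hQd]; exact div_self hQ.ne'
    linarith [g1, g2, g3, g4, g5, g6, g7]
  have hnn : (0:ℝ) ≤ (R*Q) ^ ((2:ℝ)/3) := by positivity
  calc |A|^((4:ℝ)/3)+|B|^((4:ℝ)/3)+|C|^((4:ℝ)/3)+|D|^((4:ℝ)/3)
      ≤ (R*Q) ^ ((2:ℝ)/3) * (((A^2/(r1*R) + A^2/(c1*Q) + (r1*c1)/(R*Q))/3)
        + ((B^2/(r1*R) + B^2/(c2*Q) + (r1*c2)/(R*Q))/3)
        + ((C^2/(r2*R) + C^2/(c1*Q) + (r2*c1)/(R*Q))/3)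
        + ((D^2/(r2*R) + D^2/(c2*Q) + (r2*c2)/(R*Q))/3)) := by
        rw [mul_add, mul_add, mul_add]; gcongr <;> linarith [cA, cB, cC, cD]
    _ = (R*Q) ^ ((2:ℝ)/3) := by rw [hsum, mul_one]
lemma lw_rpow_inj (x y p : ℝ) (hx : 0 ≤ x) (hy : 0 ≤ y) (hp : 0 < p) (h : x^p = y^p) :
    x = y := by
  rcases lt_trichotomy x y with hlt | he | hgt
  · exact absurd h (ne_of_lt (Real.rpow_lt_rpow hx hlt hp))
  · exact he
  · exact absurd h (ne_of_gt (Real.rpow_lt_rpow hy hgt hp))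

lemma lw_degen (C D M : ℝ) (h1 : |C+D| ≤ M) (h2 : |C-D| ≤ M) (hM : 0 < M)
    (hS : |C|^((4:ℝ)/3) + |D|^((4:ℝ)/3) = 2^((2:ℝ)/3) * M^((4:ℝ)/3)) : False := by
  have habs : |C| + |D| ≤ M := le_trans (lw_abs_add_abs_le_max C D) (max_le h1 h2)
  have h3 : |C|^((4:ℝ)/3)+|D|^((4:ℝ)/3) ≤ (|C|+|D|)^((4:ℝ)/3) :=
    lw_add_rpow_le _ _ _ (abs_nonneg _) (abs_nonneg _) (by norm_num)
  have h4 : (|C|+|D|)^((4:ℝ)/3) ≤ M^((4:ℝ)/3) :=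
    Real.rpow_le_rpow (by positivity) habs (by norm_num)
  have h5 : (1:ℝ) < 2^((2:ℝ)/3) := by
    rw [show (1:ℝ) = 2^(0:ℝ) from (Real.rpow_zero 2).symm]
    exact Real.rpow_lt_rpow_left_iff (by norm_num) |>.mpr (by norm_num)
  nlinarith [Real.rpow_pos_of_pos hM ((4:ℝ)/3)]

set_option maxHeartbeats 1000000 in
lemma lw_signs (A B C D M c : ℝ)
    (hw : |A+B+C+D| ≤ M) (hx : |A+B-C-D| ≤ M) (hy : |A-B+C-D| ≤ M) (hz : |A-B-C+D| ≤ M)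
    (hc : 0 < c) (hM2 : M = 2*c)
    (hA : A = c ∨ A = -c) (hB : B = c ∨ B = -c) (hC : C = c ∨ C = -c) (hD : D = c ∨ D = -c) :
    ∃ α : ℝ, α ≠ 0 ∧
      ((A = α ∧ B = α ∧ C = α ∧ D = -α) ∨ (A = α ∧ B = α ∧ C = -α ∧ D = α) ∨
       (A = α ∧ B = -α ∧ C = α ∧ D = α) ∨ (A = -α ∧ B = α ∧ C = α ∧ D = α)) := by
  have hcne : c ≠ 0 := hc.ne'
  have hcne' : -c ≠ 0 := neg_ne_zero.mpr hcne
  obtain ⟨hw1, hw2⟩ := abs_le.mp hw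
  obtain ⟨hx1, hx2⟩ := abs_le.mp hx
  obtain ⟨hy1, hy2⟩ := abs_le.mp hy
  obtain ⟨hz1, hz2⟩ := abs_le.mp hz
  clear hw hx hy hz
  rcases hA with hA | hA <;> rcases hB with hB | hB <;>
    rcases hC with hC | hC <;> rcases hD with hD | hD <;>
    first
    | (exfalso; linarith)
    | exact ⟨c, hcne, Or.inl ⟨by linarith, by linarith, by linarith, by linarith⟩⟩
    | exact ⟨c, hcne, Or.inr (Or.inl ⟨by linarith, by linarith, by linarith, by linarith⟩)⟩
    | exact ⟨c, hcne, Or.inr (Or.inr (Or.inl ⟨by linarith, by linarith, by linarith, by linarith⟩))⟩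
    | exact ⟨c, hcne, Or.inr (Or.inr (Or.inr ⟨by linarith, by linarith, by linarith, by linarith⟩))⟩
    | exact ⟨-c, hcne', Or.inl ⟨by linarith, by linarith, by linarith, by linarith⟩⟩
    | exact ⟨-c, hcne', Or.inr (Or.inl ⟨by linarith, by linarith, by linarith, by linarith⟩)⟩
    | exact ⟨-c, hcne', Or.inr (Or.inr (Or.inl ⟨by linarith, by linarith, by linarith, by linarith⟩))⟩
    | exact ⟨-c, hcne', Or.inr (Or.inr (Or.inr ⟨by linarith, by linarith, by linarith, by linarith⟩))⟩

set_option maxHeartbeats 1000000 in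
lemma lw_forward (A B C D M : ℝ)
    (hw : |A+B+C+D| ≤ M) (hx : |A+B-C-D| ≤ M) (hy : |A-B+C-D| ≤ M) (hz : |A-B-C+D| ≤ M)
    (hM : 0 < M)
    (hS : |A|^((4:ℝ)/3)+|B|^((4:ℝ)/3)+|C|^((4:ℝ)/3)+|D|^((4:ℝ)/3)
      = 2^((2:ℝ)/3) * M^((4:ℝ)/3)) :
    ∃ α : ℝ, α ≠ 0 ∧
      ((A = α ∧ B = α ∧ C = α ∧ D = -α) ∨ (A = α ∧ B = α ∧ C = -α ∧ D = α) ∨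
       (A = α ∧ B = -α ∧ C = α ∧ D = α) ∨ (A = -α ∧ B = α ∧ C = α ∧ D = α)) := by
  -- nondegeneracy of rows and columns
  have hrow1 : ¬(A = 0 ∧ B = 0) := by
    rintro ⟨rfl, rfl⟩
    refine lw_degen C D M ?_ ?_ hM ?_
    · rw [show C+D = 0+0+C+D from by ring]; exact hw
    · rw [show C-D = 0-0+C-D from by ring]; exact hy
    · rw [← hS, abs_zero, Real.zero_rpow (by norm_num)]; ring
  have hrow2 : ¬(C = 0 ∧ D = 0) := by
    rintro ⟨rfl, rfl⟩
    refine lw_degen A B M ?_ ?_ hM ?_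
    · rw [show A+B = A+B+0+0 from by ring]; exact hw
    · rw [show A-B = A-B+0-0 from by ring]; exact hy
    · rw [← hS, abs_zero, Real.zero_rpow (by norm_num)]; ring
  have hcol1 : ¬(A = 0 ∧ C = 0) := by
    rintro ⟨rfl, rfl⟩
    refine lw_degen B D M ?_ ?_ hM ?_
    · rw [show B+D = 0+B+0+D from by ring]; exact hw
    · rw [show B-D = 0+B-0-D from by ring]; exact hx
    · rw [← hS, abs_zero, Real.zero_rpow (by norm_num)]; ring
  have hcol2 : ¬(B = 0 ∧ D = 0) := by
    rintro ⟨rfl, rfl⟩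
    refine lw_degen A C M ?_ ?_ hM ?_
    · rw [show A+C = A+0+C+0 from by ring]; exact hw
    · rw [show A-C = A+0-C-0 from by ring]; exact hx
    · rw [← hS, abs_zero, Real.zero_rpow (by norm_num)]; ring
  have sqpos : ∀ a b : ℝ, ¬(a = 0 ∧ b = 0) → 0 < a^2 + b^2 := by
    intro a b hab
    rcases not_and_or.mp hab with h | h
    · have := abs_pos.mpr h; nlinarith [sq_abs a, sq_nonneg b]
    · have := abs_pos.mpr h; nlinarith [sq_abs b, sq_nonneg a]
  have hAB : 0 < A^2 + B^2 := sqpos A B hrow1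
  have hCD : 0 < C^2 + D^2 := sqpos C D hrow2
  have hAC : 0 < A^2 + C^2 := sqpos A C hcol1
  have hBD : 0 < B^2 + D^2 := sqpos B D hcol2
  set r1 := Real.sqrt (A^2+B^2) with hr1d
  set r2 := Real.sqrt (C^2+D^2) with hr2d
  set c1 := Real.sqrt (A^2+C^2) with hc1d
  set c2 := Real.sqrt (B^2+D^2) with hc2d
  have hr1 : 0 < r1 := Real.sqrt_pos.mpr hAB
  have hr2 : 0 < r2 := Real.sqrt_pos.mpr hCD
  have hc1 : 0 < c1 := Real.sqrt_pos.mpr hAC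
  have hc2 : 0 < c2 := Real.sqrt_pos.mpr hBD
  have hs2 : (0:ℝ) < Real.sqrt 2 := by positivity
  have hs2sq : Real.sqrt 2 * Real.sqrt 2 = 2 := Real.mul_self_sqrt (by norm_num)
  -- mixed sums bounded by M
  have p1 : |A+B| + |C+D| ≤ M := by
    refine le_trans (lw_abs_add_abs_le_max (A+B) (C+D)) (max_le ?_ ?_)
    · rw [show A+B+(C+D) = A+B+C+D from by ring]; exact hw
    · rw [show A+B-(C+D) = A+B-C-D from by ring]; exact hx
  have p2 : |A-B| + |C-D| ≤ M := by
    refine le_trans (lw_abs_add_abs_le_max (A-B) (C-D)) (max_le ?_ ?_)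
    · rw [show A-B+(C-D) = A-B+C-D from by ring]; exact hy
    · rw [show A-B-(C-D) = A-B-C+D from by ring]; exact hz
  have q1 : |A+C| + |B+D| ≤ M := by
    refine le_trans (lw_abs_add_abs_le_max (A+C) (B+D)) (max_le ?_ ?_)
    · rw [show A+C+(B+D) = A+B+C+D from by ring]; exact hw
    · rw [show A+C-(B+D) = A-B+C-D from by ring]; exact hy
  have q2 : |A-C| + |B-D| ≤ M := by
    refine le_trans (lw_abs_add_abs_le_max (A-C) (B-D)) (max_le ?_ ?_)
    · rw [show A-C+(B-D) = A+B-C-D from by ring]; exact hx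
    · rw [show A-C-(B-D) = A-B-C+D from by ring]; exact hz
  have kr1 := lw_khin A B
  have kr2 := lw_khin C D
  have kc1 := lw_khin A C
  have kc2 := lw_khin B D
  rw [← hr1d] at kr1
  rw [← hr2d] at kr2
  rw [← hc1d] at kc1
  rw [← hc2d] at kc2
  -- row and column sums bounded by √2 M
  have hRle : r1 + r2 ≤ Real.sqrt 2 * M := by
    have h1 : Real.sqrt 2 * (r1 + r2) ≤ Real.sqrt 2 * (Real.sqrt 2 * M) := by
      have e : Real.sqrt 2 * (Real.sqrt 2 * M) = 2 * M := by
        rw [← mul_assoc, hs2sq]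
      have e2 : Real.sqrt 2 * (r1 + r2) = Real.sqrt 2 * r1 + Real.sqrt 2 * r2 := by ring
      rw [e, e2]; linarith
    exact le_of_mul_le_mul_left h1 hs2
  have hQle : c1 + c2 ≤ Real.sqrt 2 * M := by
    have h1 : Real.sqrt 2 * (c1 + c2) ≤ Real.sqrt 2 * (Real.sqrt 2 * M) := by
      have e : Real.sqrt 2 * (Real.sqrt 2 * M) = 2 * M := by
        rw [← mul_assoc, hs2sq]
      have e2 : Real.sqrt 2 * (c1 + c2) = Real.sqrt 2 * c1 + Real.sqrt 2 * c2 := by ring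
      rw [e, e2]; linarith
    exact le_of_mul_le_mul_left h1 hs2
  -- Hölder
  have hH := lw_holder A B C D hAB hCD hAC hBD
  rw [← hr1d, ← hr2d, ← hc1d, ← hc2d] at hH
  have h2M : ((2:ℝ)*M^2) ^ ((2:ℝ)/3) = 2^((2:ℝ)/3) * M^((4:ℝ)/3) := by
    rw [Real.mul_rpow (by norm_num) (by positivity), ← Real.rpow_natCast M 2,
      ← Real.rpow_mul hM.le]
    norm_num
  have hprod_le : (r1+r2)*(c1+c2) ≤ 2*M^2 := by
    calc (r1+r2)*(c1+c2) ≤ (Real.sqrt 2 * M)*(Real.sqrt 2 * M) := by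
          apply mul_le_mul hRle hQle (by positivity) (by positivity)
      _ = 2*M^2 := by linear_combination M^2 * hs2sq
  have hprodEq : (r1+r2)*(c1+c2) = 2*M^2 := by
    by_contra hne
    have hlt : (r1+r2)*(c1+c2) < 2*M^2 := lt_of_le_of_ne hprod_le hne
    have := Real.rpow_lt_rpow (by positivity) hlt (by norm_num : (0:ℝ) < 2/3)
    rw [h2M] at this
    rw [hS] at hH
    linarith
  have hReq : r1 + r2 = Real.sqrt 2 * M := by
    refine le_antisymm hRle ?_
    have h1 : (Real.sqrt 2 * M) * (Real.sqrt 2 * M) ≤ (r1+r2) * (Real.sqrt 2 * M) := by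
      calc (Real.sqrt 2 * M) * (Real.sqrt 2 * M) = 2*M^2 := by linear_combination M^2 * hs2sq
        _ = (r1+r2)*(c1+c2) := hprodEq.symm
        _ ≤ (r1+r2) * (Real.sqrt 2 * M) := by
            apply mul_le_mul_of_nonneg_left hQle (by positivity)
    exact le_of_mul_le_mul_right h1 (by positivity)
  have hQeq : c1 + c2 = Real.sqrt 2 * M := by
    have : (r1+r2) * (c1+c2) = (r1+r2) * (Real.sqrt 2 * M) := by
      linear_combination hprodEq - (Real.sqrt 2 * M) * hReq - M^2 * hs2sq
    exact mul_left_cancel₀ (by positivity) this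
  -- equalities in Khintchine
  have hsum2M : Real.sqrt 2 * r1 + Real.sqrt 2 * r2 = 2 * M := by
    have : Real.sqrt 2 * (r1 + r2) = Real.sqrt 2 * (Real.sqrt 2 * M) := by rw [hReq]
    rw [← mul_assoc, hs2sq] at this
    linarith [this]
  have hsum2M' : Real.sqrt 2 * c1 + Real.sqrt 2 * c2 = 2 * M := by
    have : Real.sqrt 2 * (c1 + c2) = Real.sqrt 2 * (Real.sqrt 2 * M) := by rw [hQeq]
    rw [← mul_assoc, hs2sq] at this
    linarith [this]
  have eAB : |A| = |B| := lw_khin_eq A B (by rw [← hr1d]; linarith)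
  have eCD : |C| = |D| := lw_khin_eq C D (by rw [← hr2d]; linarith)
  have eAC : |A| = |C| := lw_khin_eq A C (by rw [← hc1d]; linarith)
  -- the common modulus
  set c := |A| with hcd
  have hc : 0 < c := by
    rcases (abs_nonneg A).lt_or_eq with h | h
    · exact h
    · exfalso
      exact hrow1 ⟨abs_eq_zero.mp h.symm, abs_eq_zero.mp (eAB ▸ h.symm)⟩
  -- M = 2c
  have hM2 : M = 2 * c := by
    have h4c : (4:ℝ) * c^((4:ℝ)/3) = 2^((2:ℝ)/3) * M^((4:ℝ)/3) := by
      rw [← hS, ← eAB, ← eCD, ← eAC]; ring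
    have h24 : (2:ℝ)^((2:ℝ)/3) * 2^((4:ℝ)/3) = 4 := by
      rw [← Real.rpow_add (by norm_num : (0:ℝ) < 2),
        show (2:ℝ)/3 + 4/3 = ((2:ℕ):ℝ) from by norm_num, Real.rpow_natCast]
      norm_num
    have hMp : M^((4:ℝ)/3) = (2*c)^((4:ℝ)/3) := by
      rw [Real.mul_rpow (by norm_num) (by positivity)]
      have h2pos : (0:ℝ) < 2^((2:ℝ)/3) := by positivity
      have : 2^((2:ℝ)/3) * M^((4:ℝ)/3) = 2^((2:ℝ)/3) * (2^((4:ℝ)/3) * c^((4:ℝ)/3)) := by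
        rw [← h4c, ← mul_assoc, h24]
      exact mul_left_cancel₀ h2pos.ne' this
    exact lw_rpow_inj M (2*c) ((4:ℝ)/3) hM.le (by positivity) (by norm_num) hMp
  -- sign analysis
  have hA : A = c ∨ A = -c := by
    rcases abs_choice A with h | h
    · exact Or.inl h.symm
    · exact Or.inr (by linarith [h])
  have hB : B = c ∨ B = -c := by
    rcases abs_choice B with h | h
    · exact Or.inl (by rw [← h, ← eAB])
    · exact Or.inr (by rw [show (-c : ℝ) = -|B| from by rw [eAB]]; linarith [h])
  have hC : C = c ∨ C = -c := by
    rcases abs_choice C with h | h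
    · exact Or.inl (by rw [← h, ← eAC])
    · exact Or.inr (by rw [show (-c : ℝ) = -|C| from by rw [eAC]]; linarith [h])
  have hD : D = c ∨ D = -c := by
    have eAD : c = |D| := by rw [eAC]; exact eCD
    rcases abs_choice D with h | h
    · exact Or.inl (by rw [← h, ← eAD])
    · exact Or.inr (by rw [show (-c : ℝ) = -|D| from by rw [eAD]]; linarith [h])
  exact lw_signs A B C D M c hw hx hy hz hc hM2 hA hB hC hD
lemma lw_bound (A B C D M x0 x1 y0 y1 mx my : ℝ)
    (hw : |A+B+C+D| ≤ M) (hx : |A+B-C-D| ≤ M) (hy : |A-B+C-D| ≤ M) (hz : |A-B-C+D| ≤ M)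
    (h0 : |x0| ≤ mx) (h1 : |x1| ≤ mx) (k0 : |y0| ≤ my) (k1 : |y1| ≤ my) :
    |A*x0*y0 + C*x1*y0 + B*x0*y1 + D*x1*y1| ≤ M * (mx * my) := by
  have hmx : 0 ≤ mx := le_trans (abs_nonneg _) h0
  have hmy : 0 ≤ my := le_trans (abs_nonneg _) k0
  set u0 := A*y0 + B*y1 with hu0
  set u1 := C*y0 + D*y1 with hu1
  have s1 : |A+C| + |B+D| ≤ M := by
    refine le_trans (lw_abs_add_abs_le_max (A+C) (B+D)) (max_le ?_ ?_)
    · rw [show A+C+(B+D) = A+B+C+D from by ring]; exact hw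
    · rw [show A+C-(B+D) = A-B+C-D from by ring]; exact hy
  have s2 : |A-C| + |B-D| ≤ M := by
    refine le_trans (lw_abs_add_abs_le_max (A-C) (B-D)) (max_le ?_ ?_)
    · rw [show A-C+(B-D) = A+B-C-D from by ring]; exact hx
    · rw [show A-C-(B-D) = A-B-C+D from by ring]; exact hz
  have t4 : |u0 + u1| ≤ M * my := by
    have e : u0 + u1 = (A+C)*y0 + (B+D)*y1 := by rw [hu0, hu1]; ring
    calc |u0 + u1| = |(A+C)*y0 + (B+D)*y1| := by rw [e]
      _ ≤ |(A+C)*y0| + |(B+D)*y1| := abs_add_le _ _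
      _ = |A+C| * |y0| + |B+D| * |y1| := by rw [abs_mul, abs_mul]
      _ ≤ |A+C| * my + |B+D| * my := by gcongr <;> assumption
      _ = (|A+C| + |B+D|) * my := by ring
      _ ≤ M * my := by apply mul_le_mul_of_nonneg_right s1 hmy
  have t5 : |u0 - u1| ≤ M * my := by
    have e : u0 - u1 = (A-C)*y0 + (B-D)*y1 := by rw [hu0, hu1]; ring
    calc |u0 - u1| = |(A-C)*y0 + (B-D)*y1| := by rw [e]
      _ ≤ |(A-C)*y0| + |(B-D)*y1| := abs_add_le _ _
      _ = |A-C| * |y0| + |B-D| * |y1| := by rw [abs_mul, abs_mul]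
      _ ≤ |A-C| * my + |B-D| * my := by gcongr <;> assumption
      _ = (|A-C| + |B-D|) * my := by ring
      _ ≤ M * my := by apply mul_le_mul_of_nonneg_right s2 hmy
  have t3 : |u0| + |u1| ≤ M * my :=
    le_trans (lw_abs_add_abs_le_max u0 u1) (max_le t4 t5)
  have e2 : A*x0*y0 + C*x1*y0 + B*x0*y1 + D*x1*y1 = x0*u0 + x1*u1 := by
    rw [hu0, hu1]; ring
  calc |A*x0*y0 + C*x1*y0 + B*x0*y1 + D*x1*y1| = |x0*u0 + x1*u1| := by rw [e2]
    _ ≤ |x0*u0| + |x1*u1| := abs_add_le _ _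
    _ = |x0| * |u0| + |x1| * |u1| := by rw [abs_mul, abs_mul]
    _ ≤ mx * |u0| + mx * |u1| := by gcongr <;> assumption
    _ = mx * (|u0| + |u1|) := by ring
    _ ≤ mx * (M * my) := by apply mul_le_mul_of_nonneg_left t3 hmx
    _ = M * (mx * my) := by ring

lemma lw_back (c : ℝ) (hc : 0 ≤ c) :
    (c^((4:ℝ)/3) + c^((4:ℝ)/3) + c^((4:ℝ)/3) + c^((4:ℝ)/3)) ^ ((3:ℝ)/4)
      = Real.sqrt 2 * (2*c) := by
  rw [show c^((4:ℝ)/3) + c^((4:ℝ)/3) + c^((4:ℝ)/3) + c^((4:ℝ)/3) = 4*c^((4:ℝ)/3) from by ring]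
  rw [Real.mul_rpow (by norm_num) (Real.rpow_nonneg hc _)]
  rw [← Real.rpow_mul hc]
  norm_num
  have h4 : (4:ℝ)^((3:ℝ)/4) = 2*Real.sqrt 2 := by
    have e : (4:ℝ) = 2^((2:ℕ):ℝ) := by rw [Real.rpow_natCast]; norm_num
    nth_rewrite 1 [e]
    rw [← Real.rpow_mul (by norm_num : (0:ℝ) ≤ 2),
      show ((2:ℕ):ℝ)*((3:ℝ)/4) = 1+1/2 from by push_cast; norm_num,
      Real.rpow_add (by norm_num : (0:ℝ) < 2), Real.rpow_one, ← Real.sqrt_eq_rpow]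
  rw [h4]
  ring
/-- Characterization of the extremal bilinear forms for Littlewood's 4/3 inequality on
`ℓ∞²(ℝ)`: a nonzero bilinear form `T(x,y) = Σ aᵢⱼ xᵢ yⱼ` attains
`(Σ |aᵢⱼ|^(4/3))^(3/4) = √2 ‖T‖` if and only if it is a nonzero multiple of one of the four
forms `±x₁y₁ ± x₁y₂ ± x₂y₁ ± x₂y₂` with exactly one minus sign. -/
theorem littlewood_43_linf2_real_equality_characterization
    (a11 a12 a21 a22 : ℝ)
    (T : (Fin 2 → ℝ) →L[ℝ] (Fin 2 → ℝ) →L[ℝ] ℝ)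
    (hT : ∀ x y : Fin 2 → ℝ,
      T x y = a11 * x 0 * y 0 + a21 * x 1 * y 0 + a12 * x 0 * y 1 + a22 * x 1 * y 1)
    (hT0 : T ≠ 0) :
    (|a11| ^ ((4 : ℝ) / 3) + |a12| ^ ((4 : ℝ) / 3)
        + |a21| ^ ((4 : ℝ) / 3) + |a22| ^ ((4 : ℝ) / 3)) ^ ((3 : ℝ) / 4)
      = Real.sqrt 2 * ‖T‖
    ↔ ∃ α : ℝ, α ≠ 0 ∧
        ((∀ x y : Fin 2 → ℝ,
            T x y = α * (x 0 * y 0 + x 0 * y 1 + x 1 * y 0 - x 1 * y 1))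
        ∨ (∀ x y : Fin 2 → ℝ,
            T x y = α * (x 0 * y 0 + x 0 * y 1 - x 1 * y 0 + x 1 * y 1))
        ∨ (∀ x y : Fin 2 → ℝ,
            T x y = α * (x 0 * y 0 - x 0 * y 1 + x 1 * y 0 + x 1 * y 1))
        ∨ (∀ x y : Fin 2 → ℝ,
            T x y = α * (-(x 0 * y 0) + x 0 * y 1 + x 1 * y 0 + x 1 * y 1))) := by
  set M := max (max |a11+a12+a21+a22| |a11+a12-a21-a22|)
    (max |a11-a12+a21-a22| |a11-a12-a21+a22|) with hMdef
  have hw : |a11+a12+a21+a22| ≤ M := (le_max_left _ _).trans (le_max_left _ _)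
  have hx : |a11+a12-a21-a22| ≤ M := (le_max_right _ _).trans (le_max_left _ _)
  have hy : |a11-a12+a21-a22| ≤ M := (le_max_left _ _).trans (le_max_right _ _)
  have hz : |a11-a12-a21+a22| ≤ M := (le_max_right _ _).trans (le_max_right _ _)
  have hM0 : 0 ≤ M := le_trans (abs_nonneg _) hw
  have hupper : ‖T‖ ≤ M := by
    refine ContinuousLinearMap.opNorm_le_bound _ hM0 ?_
    intro x
    refine ContinuousLinearMap.opNorm_le_bound _ (mul_nonneg hM0 (norm_nonneg x)) ?_
    intro y
    rw [hT x y, Real.norm_eq_abs]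
    have hb := lw_bound a11 a12 a21 a22 M (x 0) (x 1) (y 0) (y 1) ‖x‖ ‖y‖ hw hx hy hz
      (by simpa using norm_le_pi_norm x 0) (by simpa using norm_le_pi_norm x 1)
      (by simpa using norm_le_pi_norm y 0) (by simpa using norm_le_pi_norm y 1)
    calc |a11 * x 0 * y 0 + a21 * x 1 * y 0 + a12 * x 0 * y 1 + a22 * x 1 * y 1|
        ≤ M * (‖x‖ * ‖y‖) := hb
      _ = M * ‖x‖ * ‖y‖ := by ring
  have hlow : M ≤ ‖T‖ := by
    have hone : ∀ (a b : ℝ), |a| ≤ 1 → |b| ≤ 1 → ‖(![a,b] : Fin 2 → ℝ)‖ ≤ 1 := by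
      intro a b ha hb
      rw [pi_norm_le_iff_of_nonneg zero_le_one]
      intro i; fin_cases i <;> simpa
    have key : ∀ (x y : Fin 2 → ℝ), ‖x‖ ≤ 1 → ‖y‖ ≤ 1 → |T x y| ≤ ‖T‖ := by
      intro x y hx1 hy1
      have h := T.le_opNorm₂ x y
      rw [Real.norm_eq_abs] at h
      calc |T x y| ≤ ‖T‖ * ‖x‖ * ‖y‖ := h
        _ ≤ ‖T‖ * 1 * 1 := by gcongr <;> positivity
        _ = ‖T‖ := by ring
    have e1 : |a11+a12+a21+a22| ≤ ‖T‖ := by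
      have h := key ![1,1] ![1,1] (hone 1 1 (by norm_num) (by norm_num))
        (hone 1 1 (by norm_num) (by norm_num))
      rw [hT] at h
      simp only [Matrix.cons_val_zero, Matrix.cons_val_one, Matrix.head_cons] at h
      rw [show a11+a12+a21+a22 = a11*1*1 + a21*1*1 + a12*1*1 + a22*1*1 from by ring]
      exact h
    have e2 : |a11+a12-a21-a22| ≤ ‖T‖ := by
      have h := key ![1,-1] ![1,1] (hone 1 (-1) (by norm_num) (by norm_num))
        (hone 1 1 (by norm_num) (by norm_num))
      rw [hT] at h
      simp only [Matrix.cons_val_zero, Matrix.cons_val_one, Matrix.head_cons] at h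
      rw [show a11+a12-a21-a22 = a11*1*1 + a21*(-1)*1 + a12*1*1 + a22*(-1)*1 from by ring]
      exact h
    have e3 : |a11-a12+a21-a22| ≤ ‖T‖ := by
      have h := key ![1,1] ![1,-1] (hone 1 1 (by norm_num) (by norm_num))
        (hone 1 (-1) (by norm_num) (by norm_num))
      rw [hT] at h
      simp only [Matrix.cons_val_zero, Matrix.cons_val_one, Matrix.head_cons] at h
      rw [show a11-a12+a21-a22 = a11*1*1 + a21*1*1 + a12*1*(-1) + a22*1*(-1) from by ring]
      exact h
    have e4 : |a11-a12-a21+a22| ≤ ‖T‖ := by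
      have h := key ![1,-1] ![1,-1] (hone 1 (-1) (by norm_num) (by norm_num))
        (hone 1 (-1) (by norm_num) (by norm_num))
      rw [hT] at h
      simp only [Matrix.cons_val_zero, Matrix.cons_val_one, Matrix.head_cons] at h
      rw [show a11-a12-a21+a22
        = a11*1*1 + a21*(-1)*1 + a12*1*(-1) + a22*(-1)*(-1) from by ring]
      exact h
    exact max_le (max_le e1 e2) (max_le e3 e4)
  have hnorm : ‖T‖ = M := le_antisymm hupper hlow
  rw [hnorm]
  constructor
  · intro hE
    have hM : 0 < M := by
      rcases hM0.lt_or_eq with h | h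
      · exact h
      · exact absurd (T.opNorm_zero_iff.mp (hnorm.trans h.symm)) hT0
    have hSnn : (0:ℝ) ≤ |a11| ^ ((4 : ℝ) / 3) + |a12| ^ ((4 : ℝ) / 3)
        + |a21| ^ ((4 : ℝ) / 3) + |a22| ^ ((4 : ℝ) / 3) := by positivity
    have hS : |a11| ^ ((4 : ℝ) / 3) + |a12| ^ ((4 : ℝ) / 3)
        + |a21| ^ ((4 : ℝ) / 3) + |a22| ^ ((4 : ℝ) / 3)
        = 2^((2:ℝ)/3) * M^((4:ℝ)/3) := by
      have h := congrArg (fun z : ℝ => z ^ ((4:ℝ)/3)) hE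
      rw [← Real.rpow_mul hSnn, show (3:ℝ)/4 * ((4:ℝ)/3) = 1 from by norm_num,
        Real.rpow_one] at h
      rw [Real.mul_rpow (Real.sqrt_nonneg 2) hM0, Real.sqrt_eq_rpow,
        ← Real.rpow_mul (by norm_num : (0:ℝ) ≤ 2),
        show (1:ℝ)/2 * ((4:ℝ)/3) = (2:ℝ)/3 from by norm_num] at h
      exact h
    obtain ⟨α, hα, hcase⟩ := lw_forward a11 a12 a21 a22 M hw hx hy hz hM hS
    refine ⟨α, hα, ?_⟩
    rcases hcase with ⟨e1,e2,e3,e4⟩ | ⟨e1,e2,e3,e4⟩ | ⟨e1,e2,e3,e4⟩ | ⟨e1,e2,e3,e4⟩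
    · exact Or.inl (fun x y => by rw [hT, e1, e2, e3, e4]; ring)
    · exact Or.inr (Or.inl (fun x y => by rw [hT, e1, e2, e3, e4]; ring))
    · exact Or.inr (Or.inr (Or.inl (fun x y => by rw [hT, e1, e2, e3, e4]; ring)))
    · exact Or.inr (Or.inr (Or.inr (fun x y => by rw [hT, e1, e2, e3, e4]; ring)))
  · rintro ⟨α, hα, hp⟩
    have hcoef : ∀ (f : (Fin 2 → ℝ) → (Fin 2 → ℝ) → ℝ), (∀ x y, T x y = f x y) →
        a11 = f ![1,0] ![1,0] ∧ a12 = f ![1,0] ![0,1]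
          ∧ a21 = f ![0,1] ![1,0] ∧ a22 = f ![0,1] ![0,1] := by
      intro f hf
      have g1 := (hT ![1,0] ![1,0]).symm.trans (hf ![1,0] ![1,0])
      have g2 := (hT ![1,0] ![0,1]).symm.trans (hf ![1,0] ![0,1])
      have g3 := (hT ![0,1] ![1,0]).symm.trans (hf ![0,1] ![1,0])
      have g4 := (hT ![0,1] ![0,1]).symm.trans (hf ![0,1] ![0,1])
      simp only [Matrix.cons_val_zero, Matrix.cons_val_one, Matrix.head_cons] at g1 g2 g3 g4
      refine ⟨by linarith [g1], by linarith [g2], by linarith [g3], by linarith [g4]⟩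
    rcases hp with hp | hp | hp | hp
    · obtain ⟨h11, h12, h21, h22⟩ := hcoef _ hp
      simp only [Matrix.cons_val_zero, Matrix.cons_val_one, Matrix.head_cons] at h11 h12 h21 h22
      norm_num at h11 h12 h21 h22
      have hMval : M = 2*|α| := by
        rw [hMdef, h11, h12, h21, h22,
          show α+α+α+ -α = 2*α from by ring, show α+α-α- -α = 2*α from by ring,
          show α-α+α- -α = 2*α from by ring, show α-α-α+ -α = -(2*α) from by ring,
          abs_neg, max_self, max_self, abs_mul, abs_two]
      rw [hMval, h11, h12, h21, h22, abs_neg]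
      exact lw_back |α| (abs_nonneg α)
    · obtain ⟨h11, h12, h21, h22⟩ := hcoef _ hp
      simp only [Matrix.cons_val_zero, Matrix.cons_val_one, Matrix.head_cons] at h11 h12 h21 h22
      norm_num at h11 h12 h21 h22
      have hMval : M = 2*|α| := by
        rw [hMdef, h11, h12, h21, h22,
          show α+α+ -α+α = 2*α from by ring, show α+α- -α-α = 2*α from by ring,
          show α-α+ -α-α = -(2*α) from by ring, show α-α- -α+α = 2*α from by ring,
          abs_neg, max_self, max_self, abs_mul, abs_two]
      rw [hMval, h11, h12, h21, h22, abs_neg]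
      exact lw_back |α| (abs_nonneg α)
    · obtain ⟨h11, h12, h21, h22⟩ := hcoef _ hp
      simp only [Matrix.cons_val_zero, Matrix.cons_val_one, Matrix.head_cons] at h11 h12 h21 h22
      norm_num at h11 h12 h21 h22
      have hMval : M = 2*|α| := by
        rw [hMdef, h11, h12, h21, h22,
          show α+ -α+α+α = 2*α from by ring, show α+ -α-α-α = -(2*α) from by ring,
          show α- -α+α-α = 2*α from by ring, show α- -α-α+α = 2*α from by ring,
          abs_neg, max_self, max_self, abs_mul, abs_two]
      rw [hMval, h11, h12, h21, h22, abs_neg]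
      exact lw_back |α| (abs_nonneg α)
    · obtain ⟨h11, h12, h21, h22⟩ := hcoef _ hp
      simp only [Matrix.cons_val_zero, Matrix.cons_val_one, Matrix.head_cons] at h11 h12 h21 h22
      norm_num at h11 h12 h21 h22
      have hMval : M = 2*|α| := by
        rw [hMdef, h11, h12, h21, h22,
          show -α+α+α+α = 2*α from by ring, show -α+α-α-α = -(2*α) from by ring,
          show -α-α+α-α = -(2*α) from by ring, show -α-α-α+α = -(2*α) from by ring,
          abs_neg, max_self, max_self, abs_mul, abs_two]
      rw [hMval, h11, h12, h21, h22, abs_neg]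
      exact lw_back |α| (abs_nonneg α)
end

section
/- Let T : ℓ∞²(ℂ) × ℓ∞²(ℂ) → ℂ be the bilinear form T(z,w) = Σ_{i,j=1}^{2} a_{ij}z_iw_j with real coefficients a_{ij}. If a₁₁a₂₁ = 0 or a₁₂a₂₂ = 0, then (Σ_{i,j=1}^{2} |a_{ij}|^{4/3})^{3/4} ≤ ‖T‖. -/
private noncomputable def sgn1 (a : ℝ) : ℝ := if 0 ≤ a then 1 else -1

private lemma abs_sgn1 (a : ℝ) : |sgn1 a| = 1 := by
  unfold sgn1; split <;> simp

private lemma mul_sgn1 (a : ℝ) : a * sgn1 a = |a| := by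
  unfold sgn1; split
  · simp [abs_of_nonneg ‹_›]
  · rw [abs_of_neg (lt_of_not_ge ‹_›)]; ring

private lemma sgn1_sq (a : ℝ) : sgn1 a * sgn1 a = 1 := by
  unfold sgn1; split <;> norm_num

private lemma rpow43_le (x S : ℝ) (hx : 0 ≤ x) (hxS : x ≤ S) :
    x ^ ((4 : ℝ) / 3) ≤ x * S ^ ((1 : ℝ) / 3) := by
  have h1 : x ^ ((4 : ℝ) / 3) = x ^ (1 : ℝ) * x ^ ((1 : ℝ) / 3) := by
    rw [← Real.rpow_add' hx (by norm_num)]; norm_num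
  rw [h1, Real.rpow_one]
  exact mul_le_mul_of_nonneg_left (Real.rpow_le_rpow hx hxS (by norm_num))
    hx

private lemma sum43 (x y z w : ℝ) (hx : 0 ≤ x) (hy : 0 ≤ y) (hz : 0 ≤ z) (hw : 0 ≤ w) :
    (x ^ ((4 : ℝ) / 3) + y ^ ((4 : ℝ) / 3) + z ^ ((4 : ℝ) / 3) + w ^ ((4 : ℝ) / 3))
      ^ ((3 : ℝ) / 4) ≤ x + y + z + w := by
  set S := x + y + z + w with hSdef
  have hS : 0 ≤ S := by positivity
  have hsum : x ^ ((4:ℝ)/3) + y ^ ((4:ℝ)/3) + z ^ ((4:ℝ)/3) + w ^ ((4:ℝ)/3)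
      ≤ S ^ ((4:ℝ)/3) := by
    have h1 := rpow43_le x S hx (by linarith)
    have h2 := rpow43_le y S hy (by linarith)
    have h3 := rpow43_le z S hz (by linarith)
    have h4 := rpow43_le w S hw (by linarith)
    have hS43 : S ^ ((4:ℝ)/3) = S * S ^ ((1:ℝ)/3) := by
      rw [show ((4:ℝ)/3) = 1 + 1/3 by norm_num, Real.rpow_add' hS (by norm_num),
        Real.rpow_one]
    nlinarith [Real.rpow_nonneg hS ((1:ℝ)/3)]
  calc (x ^ ((4:ℝ)/3) + y ^ ((4:ℝ)/3) + z ^ ((4:ℝ)/3) + w ^ ((4:ℝ)/3)) ^ ((3:ℝ)/4)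
      ≤ (S ^ ((4:ℝ)/3)) ^ ((3:ℝ)/4) := by
        apply Real.rpow_le_rpow (by positivity) hsum (by norm_num)
    _ = S := by
        rw [← Real.rpow_mul hS]; norm_num

private lemma aux_norm (a11 a12 a21 a22 : ℝ)
    (T : (Fin 2 → ℂ) →L[ℂ] (Fin 2 → ℂ) →L[ℂ] ℂ)
    (hT : ∀ z w : Fin 2 → ℂ,
      T z w = (a11 : ℂ) * z 0 * w 0 + (a21 : ℂ) * z 1 * w 0
        + (a12 : ℂ) * z 0 * w 1 + (a22 : ℂ) * z 1 * w 1)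
    (s0 s1 t0 t1 : ℝ)
    (hs0 : |s0| = 1) (hs1 : |s1| = 1) (ht0 : |t0| = 1) (ht1 : |t1| = 1)
    (key : a11 * (s0 * t0) + a21 * (s1 * t0) + a12 * (s0 * t1) + a22 * (s1 * t1)
      = |a11| + |a12| + |a21| + |a22|) :
    |a11| + |a12| + |a21| + |a22| ≤ ‖T‖ := by
  set z : Fin 2 → ℂ := ![(s0 : ℂ), (s1 : ℂ)] with hzdef
  set w : Fin 2 → ℂ := ![(t0 : ℂ), (t1 : ℂ)] with hwdef
  have hz : ‖z‖ ≤ 1 := by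
    apply pi_norm_le_iff_of_nonneg zero_le_one |>.2
    intro i
    fin_cases i <;> simp [hzdef, hs0, hs1]
  have hw : ‖w‖ ≤ 1 := by
    apply pi_norm_le_iff_of_nonneg zero_le_one |>.2
    intro i
    fin_cases i <;> simp [hwdef, ht0, ht1]
  have hval : T z w = ((|a11| + |a12| + |a21| + |a22| : ℝ) : ℂ) := by
    rw [hT]
    simp only [hzdef, hwdef, Matrix.cons_val_zero, Matrix.cons_val_one, Matrix.head_cons]
    push_cast
    exact_mod_cast congrArg (Complex.ofReal ·) (by linear_combination key)
  have hnorm : ‖T z w‖ = |a11| + |a12| + |a21| + |a22| := by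
    rw [hval, Complex.norm_real]
    exact abs_of_nonneg (by positivity)
  calc |a11| + |a12| + |a21| + |a22| = ‖T z w‖ := hnorm.symm
    _ ≤ ‖T‖ * ‖z‖ * ‖w‖ := T.le_opNorm₂ z w
    _ ≤ ‖T‖ * 1 * 1 := by
        gcongr
    _ = ‖T‖ := by ring

/-- Case (1) of Theorem 5.1: if `a₁₁a₂₁ = 0` or `a₁₂a₂₂ = 0`, then the complex bilinear form with real coefficients satisfies Littlewood's 4/3 inequality with constant 1. -/
theorem littlewood_43_linf2_complex_case1
    (a11 a12 a21 a22 : ℝ)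
    (T : (Fin 2 → ℂ) →L[ℂ] (Fin 2 → ℂ) →L[ℂ] ℂ)
    (hT : ∀ z w : Fin 2 → ℂ,
      T z w = (a11 : ℂ) * z 0 * w 0 + (a21 : ℂ) * z 1 * w 0
        + (a12 : ℂ) * z 0 * w 1 + (a22 : ℂ) * z 1 * w 1)
    (h : a11 * a21 = 0 ∨ a12 * a22 = 0) :
    (|a11| ^ ((4 : ℝ) / 3) + |a12| ^ ((4 : ℝ) / 3)
        + |a21| ^ ((4 : ℝ) / 3) + |a22| ^ ((4 : ℝ) / 3)) ^ ((3 : ℝ) / 4)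
      ≤ ‖T‖ := by
  have step1 := sum43 |a11| |a12| |a21| |a22| (abs_nonneg _) (abs_nonneg _)
    (abs_nonneg _) (abs_nonneg _)
  refine le_trans step1 ?_
  rcases h with h | h
  · rcases mul_eq_zero.1 h with h0 | h0
    · -- a11 = 0
      subst h0
      refine aux_norm 0 a12 a21 a22 T hT (sgn1 a12 * sgn1 a22) 1 (sgn1 a21) (sgn1 a22)
        (by rw [abs_mul, abs_sgn1, abs_sgn1]; ring) (abs_one) (abs_sgn1 _) (abs_sgn1 _) ?_
      simp only [abs_zero]
      linear_combination mul_sgn1 a21 + mul_sgn1 a22 +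
        (a12 * sgn1 a12) * sgn1_sq a22 + mul_sgn1 a12
    · -- a21 = 0
      subst h0
      refine aux_norm a11 a12 0 a22 T hT 1 (sgn1 a22 * sgn1 a12) (sgn1 a11) (sgn1 a12)
        (abs_one) (by rw [abs_mul, abs_sgn1, abs_sgn1]; ring) (abs_sgn1 _) (abs_sgn1 _) ?_
      simp only [abs_zero]
      linear_combination mul_sgn1 a11 + mul_sgn1 a12 +
        (a22 * sgn1 a22) * sgn1_sq a12 + mul_sgn1 a22
  · rcases mul_eq_zero.1 h with h0 | h0
    · -- a12 = 0
      subst h0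
      refine aux_norm a11 0 a21 a22 T hT (sgn1 a11) (sgn1 a21) 1 (sgn1 a22 * sgn1 a21)
        (abs_sgn1 _) (abs_sgn1 _) (abs_one) (by rw [abs_mul, abs_sgn1, abs_sgn1]; ring) ?_
      simp only [abs_zero]
      linear_combination mul_sgn1 a11 + mul_sgn1 a21 +
        (a22 * sgn1 a22) * sgn1_sq a21 + mul_sgn1 a22
    · -- a22 = 0
      subst h0
      refine aux_norm a11 a12 a21 0 T hT (sgn1 a11) (sgn1 a21) 1 (sgn1 a12 * sgn1 a11)
        (abs_sgn1 _) (abs_sgn1 _) (abs_one) (by rw [abs_mul, abs_sgn1, abs_sgn1]; ring) ?_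
      simp only [abs_zero]
      linear_combination mul_sgn1 a11 + mul_sgn1 a21 +
        (a12 * sgn1 a12) * sgn1_sq a11 + mul_sgn1 a12
end

section
/- Let T : ℓ∞²(ℂ) × ℓ∞²(ℂ) → ℂ be the bilinear form T(z,w) = Σ_{i,j=1}^{2} a_{ij}z_iw_j with real coefficients a_{ij}. If a₁₁a₂₁ > 0 and a₁₂a₂₂ > 0, then (Σ_{i,j=1}^{2} |a_{ij}|^{4/3})^{3/4} ≤ ‖T‖. -/
lemma littlewood_aux_rpow43 (x : ℝ) (hx : 0 ≤ x) :
    x ^ ((4 : ℝ)/3) = x * x ^ ((1 : ℝ)/3) := by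
  rcases hx.eq_or_lt with h | h
  · rw [← h]
    rw [Real.zero_rpow (by norm_num), zero_mul]
  · rw [show (4:ℝ)/3 = 1 + 1/3 by norm_num, Real.rpow_add h, Real.rpow_one]

lemma littlewood_aux_l43_le_l1 (x1 x2 x3 x4 : ℝ)
    (h1 : 0 ≤ x1) (h2 : 0 ≤ x2) (h3 : 0 ≤ x3) (h4 : 0 ≤ x4) :
    (x1 ^ ((4:ℝ)/3) + x2 ^ ((4:ℝ)/3) + x3 ^ ((4:ℝ)/3) + x4 ^ ((4:ℝ)/3)) ^ ((3:ℝ)/4)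
      ≤ x1 + x2 + x3 + x4 := by
  set S := x1 + x2 + x3 + x4 with hS
  have hSnn : 0 ≤ S := by positivity
  have key : x1 ^ ((4:ℝ)/3) + x2 ^ ((4:ℝ)/3) + x3 ^ ((4:ℝ)/3) + x4 ^ ((4:ℝ)/3)
      ≤ S ^ ((4:ℝ)/3) := by
    have h13 : ∀ x : ℝ, 0 ≤ x → x ≤ S → x ^ ((4:ℝ)/3) ≤ x * S ^ ((1:ℝ)/3) := by
      intro x hx hxS
      rw [littlewood_aux_rpow43 x hx]
      exact mul_le_mul_of_nonneg_left
        (Real.rpow_le_rpow hx hxS (by norm_num)) hx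
    have e1 := h13 x1 h1 (by linarith)
    have e2 := h13 x2 h2 (by linarith)
    have e3 := h13 x3 h3 (by linarith)
    have e4 := h13 x4 h4 (by linarith)
    have : S ^ ((4:ℝ)/3) = S * S ^ ((1:ℝ)/3) := littlewood_aux_rpow43 S hSnn
    rw [this]
    nlinarith [Real.rpow_nonneg hSnn ((1:ℝ)/3)]
  calc (x1 ^ ((4:ℝ)/3) + x2 ^ ((4:ℝ)/3) + x3 ^ ((4:ℝ)/3) + x4 ^ ((4:ℝ)/3)) ^ ((3:ℝ)/4)
      ≤ (S ^ ((4:ℝ)/3)) ^ ((3:ℝ)/4) := by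
        apply Real.rpow_le_rpow (by positivity) key (by norm_num)
    _ = S := by
        rw [← Real.rpow_mul hSnn]
        norm_num

/-- Case (2) of Theorem 5.1: if `a₁₁a₂₁ > 0` and `a₁₂a₂₂ > 0`, then the complex bilinear form with real coefficients satisfies Littlewood's 4/3 inequality with constant 1. -/
theorem littlewood_43_linf2_complex_case2
    (a11 a12 a21 a22 : ℝ)
    (T : (Fin 2 → ℂ) →L[ℂ] (Fin 2 → ℂ) →L[ℂ] ℂ)
    (hT : ∀ z w : Fin 2 → ℂ,
      T z w = (a11 : ℂ) * z 0 * w 0 + (a21 : ℂ) * z 1 * w 0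
        + (a12 : ℂ) * z 0 * w 1 + (a22 : ℂ) * z 1 * w 1)
    (h1 : a11 * a21 > 0) (h2 : a12 * a22 > 0) :
    (|a11| ^ ((4 : ℝ) / 3) + |a12| ^ ((4 : ℝ) / 3)
        + |a21| ^ ((4 : ℝ) / 3) + |a22| ^ ((4 : ℝ) / 3)) ^ ((3 : ℝ) / 4)
      ≤ ‖T‖ := by
  have step1 : (|a11| ^ ((4 : ℝ) / 3) + |a12| ^ ((4 : ℝ) / 3)
      + |a21| ^ ((4 : ℝ) / 3) + |a22| ^ ((4 : ℝ) / 3)) ^ ((3 : ℝ) / 4)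
      ≤ |a11| + |a12| + |a21| + |a22| :=
    littlewood_aux_l43_le_l1 _ _ _ _ (abs_nonneg _) (abs_nonneg _) (abs_nonneg _) (abs_nonneg _)
  refine step1.trans ?_
  -- choose sign vectors
  set e1 : ℝ := if 0 ≤ a11 then 1 else -1 with he1
  set e2 : ℝ := if 0 ≤ a12 then 1 else -1 with he2
  set z : Fin 2 → ℂ := ![1, 1] with hz
  set w : Fin 2 → ℂ := ![(e1 : ℂ), (e2 : ℂ)] with hw
  have hc1 : (a11 + a21) * e1 = |a11| + |a21| := by
    rw [he1]; split_ifs with h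
    · have ha11 : 0 < a11 := lt_of_le_of_ne h (by rintro rfl; simp at h1)
      have ha21 : 0 < a21 := by nlinarith
      rw [abs_of_pos ha11, abs_of_pos ha21]; ring
    · push_neg at h
      have ha21 : a21 < 0 := by nlinarith
      rw [abs_of_neg h, abs_of_neg ha21]; ring
  have hc2 : (a12 + a22) * e2 = |a12| + |a22| := by
    rw [he2]; split_ifs with h
    · have ha12 : 0 < a12 := lt_of_le_of_ne h (by rintro rfl; simp at h2)
      have ha22 : 0 < a22 := by nlinarith
      rw [abs_of_pos ha12, abs_of_pos ha22]; ring
    · push_neg at h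
      have ha22 : a22 < 0 := by nlinarith
      rw [abs_of_neg h, abs_of_neg ha22]; ring
  have hTzw : T z w = (((|a11| + |a21|) + (|a12| + |a22|) : ℝ) : ℂ) := by
    rw [hT z w]
    simp only [hz, hw, Matrix.cons_val_zero, Matrix.cons_val_one, Matrix.head_cons]
    rw [← hc1, ← hc2]
    push_cast
    ring
  have hnormz : ‖z‖ ≤ 1 := by
    rw [hz]
    apply pi_norm_le_iff_of_nonneg zero_le_one |>.2
    intro i
    fin_cases i <;> simp
  have hnormw : ‖w‖ ≤ 1 := by
    rw [hw]
    apply pi_norm_le_iff_of_nonneg zero_le_one |>.2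
    intro i
    fin_cases i
    · simp only [Matrix.cons_val_zero, Complex.norm_real, Real.norm_eq_abs]
      rw [he1]; split_ifs <;> norm_num
    · simp only [Matrix.cons_val_one, Matrix.head_cons, Complex.norm_real, Real.norm_eq_abs]
      rw [he2]; split_ifs <;> norm_num
  have hb := T.le_opNorm₂ z w
  have hnorm : ‖T z w‖ = |a11| + |a21| + |a12| + |a22| := by
    rw [hTzw, Complex.norm_real, Real.norm_eq_abs,
      abs_of_nonneg (show (0:ℝ) ≤ |a11| + |a21| + (|a12| + |a22|) by positivity)]
    ring
  have hTnn : 0 ≤ ‖T‖ := T.opNorm_nonneg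
  nlinarith [mul_le_mul_of_nonneg_left hnormw (mul_nonneg hTnn (norm_nonneg z)),
    mul_le_mul_of_nonneg_left hnormz hTnn]
end

section
/- Let T : ℓ∞²(ℂ) × ℓ∞²(ℂ) → ℂ be the bilinear form T(z,w) = Σ_{i,j=1}^{2} a_{ij}z_iw_j with real coefficients a_{ij}. If a₁₁a₂₁ < 0 and a₁₂a₂₂ < 0, then (Σ_{i,j=1}^{2} |a_{ij}|^{4/3})^{3/4} ≤ ‖T‖. -/
/-- ℓ^{4/3} sum bound by ℓ¹ sum, for four nonneg reals with positive sum. -/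
lemma l43_le_l1 (x y z w : ℝ) (hx : 0 ≤ x) (hy : 0 ≤ y) (hz : 0 ≤ z) (hw : 0 ≤ w)
    (hP : 0 < x + y + z + w) :
    (x ^ ((4 : ℝ) / 3) + y ^ ((4 : ℝ) / 3) + z ^ ((4 : ℝ) / 3) + w ^ ((4 : ℝ) / 3))
      ^ ((3 : ℝ) / 4) ≤ x + y + z + w := by
  set P := x + y + z + w with hPdef
  have key : ∀ u : ℝ, 0 ≤ u → u ≤ P → u ^ ((4 : ℝ) / 3) ≤ u * P ^ ((1 : ℝ) / 3) := by
    intro u hu huP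
    rcases eq_or_lt_of_le hu with h | h
    · rw [← h, Real.zero_rpow (by norm_num), zero_mul]
    · have : u ^ ((4 : ℝ) / 3) = u * u ^ ((1 : ℝ) / 3) := by
        rw [show (4 : ℝ) / 3 = 1 + 1 / 3 by norm_num, Real.rpow_add h, Real.rpow_one]
      rw [this]
      exact mul_le_mul_of_nonneg_left
        (Real.rpow_le_rpow hu huP (by norm_num)) hu
  have hsum : x ^ ((4 : ℝ) / 3) + y ^ ((4 : ℝ) / 3) + z ^ ((4 : ℝ) / 3)
      + w ^ ((4 : ℝ) / 3) ≤ P ^ ((4 : ℝ) / 3) := by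
    have hx' := key x hx (by linarith)
    have hy' := key y hy (by linarith)
    have hz' := key z hz (by linarith)
    have hw' := key w hw (by linarith)
    have : P * P ^ ((1 : ℝ) / 3) = P ^ ((4 : ℝ) / 3) := by
      rw [show (4 : ℝ) / 3 = 1 + 1 / 3 by norm_num, Real.rpow_add hP, Real.rpow_one]
    nlinarith
  calc (x ^ ((4 : ℝ) / 3) + y ^ ((4 : ℝ) / 3) + z ^ ((4 : ℝ) / 3) + w ^ ((4 : ℝ) / 3))
        ^ ((3 : ℝ) / 4)
      ≤ (P ^ ((4 : ℝ) / 3)) ^ ((3 : ℝ) / 4) := by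
        apply Real.rpow_le_rpow _ hsum (by norm_num)
        positivity
    _ = P := by
        rw [← Real.rpow_mul hP.le]
        norm_num

/-- Case (3) of Theorem 5.1: if `a₁₁a₂₁ < 0` and `a₁₂a₂₂ < 0`, then the complex bilinear form with real coefficients satisfies Littlewood's 4/3 inequality with constant 1. -/
theorem littlewood_43_linf2_complex_case3
    (a11 a12 a21 a22 : ℝ)
    (T : (Fin 2 → ℂ) →L[ℂ] (Fin 2 → ℂ) →L[ℂ] ℂ)
    (hT : ∀ z w : Fin 2 → ℂ,
      T z w = (a11 : ℂ) * z 0 * w 0 + (a21 : ℂ) * z 1 * w 0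
        + (a12 : ℂ) * z 0 * w 1 + (a22 : ℂ) * z 1 * w 1)
    (h1 : a11 * a21 < 0) (h2 : a12 * a22 < 0) :
    (|a11| ^ ((4 : ℝ) / 3) + |a12| ^ ((4 : ℝ) / 3)
        + |a21| ^ ((4 : ℝ) / 3) + |a22| ^ ((4 : ℝ) / 3)) ^ ((3 : ℝ) / 4)
      ≤ ‖T‖ := by
  set S := |a11| + |a12| + |a21| + |a22| with hSdef
  -- sign facts
  have habs1 : |a11 - a21| = |a11| + |a21| := by
    rcases mul_neg_iff.mp h1 with ⟨ha, hb⟩ | ⟨ha, hb⟩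
    · rw [abs_of_pos ha, abs_of_neg hb, abs_of_pos (by linarith)]; ring
    · rw [abs_of_neg ha, abs_of_pos hb, abs_of_neg (by linarith)]; ring
  have habs2 : |a12 - a22| = |a12| + |a22| := by
    rcases mul_neg_iff.mp h2 with ⟨ha, hb⟩ | ⟨ha, hb⟩
    · rw [abs_of_pos ha, abs_of_neg hb, abs_of_pos (by linarith)]; ring
    · rw [abs_of_neg ha, abs_of_pos hb, abs_of_neg (by linarith)]; ring
  set s : ℝ := if 0 ≤ a11 then 1 else -1 with hsdef
  have hs_abs : |s| = 1 := by
    rw [hsdef]; split <;> norm_num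
  have hs1 : s * (a11 - a21) = |a11| + |a21| := by
    rw [← habs1, hsdef]
    rcases mul_neg_iff.mp h1 with ⟨ha, hb⟩ | ⟨ha, hb⟩
    · rw [if_pos ha.le, abs_of_pos (by linarith)]; ring
    · rw [if_neg (not_le.mpr ha), abs_of_neg (by linarith)]; ring
  set c : ℝ := s * (a12 - a22) with hcdef
  have hc_abs : |c| = |a12| + |a22| := by
    rw [hcdef, abs_mul, hs_abs, one_mul, habs2]
  set t : ℝ := if 0 ≤ c then 1 else -1 with htdef
  have ht_abs : |t| = 1 := by
    rw [htdef]; split <;> norm_num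
  have ht : t * c = |a12| + |a22| := by
    rw [← hc_abs, htdef]
    split
    · rw [one_mul, abs_of_nonneg (by assumption)]
    · rw [abs_of_neg (by linarith [not_le.mp (by assumption)]), neg_one_mul]
  -- the test vectors
  have key : T ![(s : ℂ), (-s : ℂ)] ![1, (t : ℂ)] = (S : ℂ) := by
    rw [hT]
    have ht' : t * (s * (a12 - a22)) = |a12| + |a22| := by rw [← hcdef]; exact ht
    have hreal : a11 * s * 1 + a21 * (-s) * 1 + a12 * s * t + a22 * (-s) * t = S := by
      rw [hSdef]; linear_combination hs1 + ht'
    simp only [Matrix.cons_val_zero, Matrix.cons_val_one, Matrix.head_cons]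
    push_cast [← hreal]
    ring
  have hS_pos : 0 < S := by
    have : a11 ≠ 0 := by rintro rfl; simp at h1
    have := abs_pos.mpr this
    rw [hSdef]
    positivity
  have hST : S ≤ ‖T‖ := by
    have hz : ‖(![(s : ℂ), (-s : ℂ)] : Fin 2 → ℂ)‖ ≤ 1 := by
      rw [pi_norm_le_iff_of_nonneg zero_le_one]
      intro i
      fin_cases i <;>
        simp [Complex.norm_real, hs_abs]
    have hw : ‖(![(1 : ℂ), (t : ℂ)] : Fin 2 → ℂ)‖ ≤ 1 := by
      rw [pi_norm_le_iff_of_nonneg zero_le_one]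
      intro i
      fin_cases i <;>
        simp [Complex.norm_real, ht_abs]
    have h := T.le_opNorm₂ ![(s : ℂ), (-s : ℂ)] ![1, (t : ℂ)]
    rw [key] at h
    have hnorm : ‖(S : ℂ)‖ = S := by
      rw [Complex.norm_real, Real.norm_eq_abs, abs_of_pos hS_pos]
    rw [hnorm] at h
    calc S ≤ ‖T‖ * ‖(![(s : ℂ), (-s : ℂ)] : Fin 2 → ℂ)‖
          * ‖(![(1 : ℂ), (t : ℂ)] : Fin 2 → ℂ)‖ := h
      _ ≤ ‖T‖ * 1 * 1 := by gcongr
      _ = ‖T‖ := by ring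
  refine le_trans ?_ hST
  exact l43_le_l1 _ _ _ _ (abs_nonneg _) (abs_nonneg _) (abs_nonneg _) (abs_nonneg _) hS_pos
end

section
/- Let T : ℓ∞²(ℂ) × ℓ∞²(ℂ) → ℂ be the bilinear form T(z,w) = Σ_{i,j=1}^{2} a_{ij}z_iw_j with real coefficients a_{ij}. If a₁₁a₂₁ > 0, a₁₂a₂₂ < 0 and a₁₁a₂₁ + a₁₂a₂₂ = 0, then (Σ_{i,j=1}^{2} |a_{ij}|^{4/3})^{3/4} ≤ ‖T‖. -/
private lemma gm23 {a b : ℝ} (ha : 0 ≤ a) (hb : 0 ≤ b) :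
    a ^ ((2:ℝ)/3) * b ^ ((1:ℝ)/3) ≤ 2/3*a + 1/3*b :=
  Real.geom_mean_le_arith_mean2_weighted (by norm_num) (by norm_num) ha hb (by norm_num)

private lemma rpow43 {x : ℝ} (hx : 0 ≤ x) :
    x ^ ((2:ℝ)/3) * (x^2) ^ ((1:ℝ)/3) = x ^ ((4:ℝ)/3) := by
  rw [← Real.rpow_natCast x 2, ← Real.rpow_mul hx,
    ← Real.rpow_add' hx (by norm_num : (2:ℝ)/3 + (2:ℕ)*((1:ℝ)/3) ≠ 0)]
  norm_num

private lemma holder43 {x y : ℝ} (hx : 0 ≤ x) (hy : 0 ≤ y) :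
    x ^ ((4:ℝ)/3) + y ^ ((4:ℝ)/3) ≤ (x+y) ^ ((2:ℝ)/3) * (x^2+y^2) ^ ((1:ℝ)/3) := by
  rcases eq_or_lt_of_le (add_nonneg hx hy) with h0 | hA
  · have hx0 : x = 0 := by nlinarith
    have hy0 : y = 0 := by nlinarith
    simp [hx0, hy0, Real.zero_rpow (by norm_num : (4:ℝ)/3 ≠ 0)]
  · have hB : 0 < x^2 + y^2 := by nlinarith [sq_nonneg (x+y), sq_nonneg (x-y)]
    set A := x + y with hAdef
    set B := x^2 + y^2 with hBdef
    have hApos : (0:ℝ) < A := hA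
    have key : ∀ u : ℝ, 0 ≤ u →
        u ^ ((4:ℝ)/3) ≤ A ^ ((2:ℝ)/3) * B ^ ((1:ℝ)/3) * (2/3*(u/A) + 1/3*(u^2/B)) := by
      intro u hu
      have h1 := gm23 (div_nonneg hu hApos.le) (div_nonneg (sq_nonneg u) hB.le)
      have h2 : (u/A) ^ ((2:ℝ)/3) * (u^2/B) ^ ((1:ℝ)/3)
          = u ^ ((2:ℝ)/3) * (u^2) ^ ((1:ℝ)/3) / (A ^ ((2:ℝ)/3) * B ^ ((1:ℝ)/3)) := by
        rw [Real.div_rpow hu hApos.le, Real.div_rpow (sq_nonneg u) hB.le]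
        ring
      have hABpos : 0 < A ^ ((2:ℝ)/3) * B ^ ((1:ℝ)/3) :=
        mul_pos (Real.rpow_pos_of_pos hApos _) (Real.rpow_pos_of_pos hB _)
      rw [h2] at h1
      calc u ^ ((4:ℝ)/3) = u ^ ((2:ℝ)/3) * (u^2) ^ ((1:ℝ)/3) := (rpow43 hu).symm
        _ ≤ A ^ ((2:ℝ)/3) * B ^ ((1:ℝ)/3) * (2/3*(u/A) + 1/3*(u^2/B)) := by
            rw [← div_le_iff₀' hABpos] at *
            linarith [h1]
    have hxk := key x hx
    have hyk := key y hy
    have hsum : A ^ ((2:ℝ)/3) * B ^ ((1:ℝ)/3) * (2/3*(x/A) + 1/3*(x^2/B))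
        + A ^ ((2:ℝ)/3) * B ^ ((1:ℝ)/3) * (2/3*(y/A) + 1/3*(y^2/B))
        = A ^ ((2:ℝ)/3) * B ^ ((1:ℝ)/3) := by
      field_simp
      ring
    linarith

private lemma sq23 {x : ℝ} (hx : 0 ≤ x) : (x^2) ^ ((2:ℝ)/3) = x ^ ((4:ℝ)/3) := by
  rw [← Real.rpow_natCast x 2, ← Real.rpow_mul hx]; norm_num

private lemma sum4 {p q r s : ℝ} (hp : 0 ≤ p) (hq : 0 ≤ q) (hr : 0 ≤ r) (hs : 0 ≤ s) :
    p ^ ((4:ℝ)/3) + q ^ ((4:ℝ)/3) + r ^ ((4:ℝ)/3) + s ^ ((4:ℝ)/3)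
      ≤ (2*(p^2+q^2+r^2+s^2)) ^ ((2:ℝ)/3) := by
  rcases eq_or_lt_of_le (by positivity : (0:ℝ) ≤ p^2+q^2+r^2+s^2) with h0 | hY
  · have h1 : p = 0 := by nlinarith [sq_nonneg p, sq_nonneg q, sq_nonneg r, sq_nonneg s]
    have h2 : q = 0 := by nlinarith [sq_nonneg p, sq_nonneg q, sq_nonneg r, sq_nonneg s]
    have h3 : r = 0 := by nlinarith [sq_nonneg p, sq_nonneg q, sq_nonneg r, sq_nonneg s]
    have h4 : s = 0 := by nlinarith [sq_nonneg p, sq_nonneg q, sq_nonneg r, sq_nonneg s]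
    simp [h1, h2, h3, h4, Real.zero_rpow (by norm_num : (4:ℝ)/3 ≠ 0),
      Real.zero_rpow (by norm_num : (2:ℝ)/3 ≠ 0)]
  · set Y := p^2+q^2+r^2+s^2 with hYdef
    have h2Y : (0:ℝ) < 2*Y := by linarith
    have heighth : ((1:ℝ)/8) ^ ((1:ℝ)/3) = 1/2 := by
      rw [show (1/8:ℝ) = (1/2)^(3:ℕ) by norm_num, ← Real.rpow_natCast ((1:ℝ)/2) 3,
        ← Real.rpow_mul (by norm_num : (0:ℝ) ≤ 1/2)]
      norm_num
    have key : ∀ u : ℝ, 0 ≤ u →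
        u ^ ((4:ℝ)/3) ≤ (2*Y) ^ ((2:ℝ)/3) * (4/3*(u^2/(2*Y)) + 1/12) := by
      intro u hu
      have h1 := gm23 (div_nonneg (sq_nonneg u) h2Y.le) (by norm_num : (0:ℝ) ≤ 1/8)
      rw [heighth] at h1
      have h2 : (u^2/(2*Y)) ^ ((2:ℝ)/3) = u ^ ((4:ℝ)/3) / (2*Y) ^ ((2:ℝ)/3) := by
        rw [Real.div_rpow (sq_nonneg u) h2Y.le, sq23 hu]
      have hpow : (0:ℝ) < (2*Y) ^ ((2:ℝ)/3) := Real.rpow_pos_of_pos h2Y _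
      rw [h2] at h1
      have h3 : u ^ ((4:ℝ)/3) / (2*Y) ^ ((2:ℝ)/3) ≤ 4/3*(u^2/(2*Y)) + 1/12 := by linarith
      calc u ^ ((4:ℝ)/3) = (u ^ ((4:ℝ)/3) / (2*Y) ^ ((2:ℝ)/3)) * (2*Y) ^ ((2:ℝ)/3) := by
            field_simp
        _ ≤ (4/3*(u^2/(2*Y)) + 1/12) * (2*Y) ^ ((2:ℝ)/3) := by
            exact mul_le_mul_of_nonneg_right h3 hpow.le
        _ = (2*Y) ^ ((2:ℝ)/3) * (4/3*(u^2/(2*Y)) + 1/12) := by ring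
    have h1 := key p hp
    have h2 := key q hq
    have h3 := key r hr
    have h4 := key s hs
    have hsum : (2*Y) ^ ((2:ℝ)/3) * (4/3*(p^2/(2*Y)) + 1/12)
        + (2*Y) ^ ((2:ℝ)/3) * (4/3*(q^2/(2*Y)) + 1/12)
        + (2*Y) ^ ((2:ℝ)/3) * (4/3*(r^2/(2*Y)) + 1/12)
        + (2*Y) ^ ((2:ℝ)/3) * (4/3*(s^2/(2*Y)) + 1/12) = (2*Y) ^ ((2:ℝ)/3) := by
      field_simp
      ring
    linarith

private lemma poly_ineq {b c d : ℝ} (hb : 0 < b) (hc : 0 < c) (hd : 0 < d)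
    (h : d*(c+b) ≤ c*(c-b)) :
    ((b+c)*(c+d))^2 * ((b^2+c^2)*(c^2+d^2)) ≤ (c*(b+c+d) - b*d)^4 := by
  have h' : (b+c)*(c+d) ≤ 2*c^2 := by nlinarith
  have hA : 0 ≤ ((b+c)*(c+d)-2*b*d)^2 - (b+c)*(c+d)*(c^2+b*d) := by
    nlinarith [mul_pos hb hd, mul_pos hb hc, mul_pos hc hd, sq_nonneg (b-d), sq_nonneg (b*d),
      mul_nonneg (mul_nonneg hb.le hd.le) (sub_nonneg.2 h'), sq_nonneg ((b+c)*(c+d)-2*b*d),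
      sq_nonneg (c^2-b*d)]
  have h2 : (b+c)*(c+d)*c^2*(b-d)^2
      ≤ 2*(((b+c)*(c+d)-2*b*d)^2 - (b+c)*(c+d)*(c^2+b*d))*(c^2+b*d) := by
    nlinarith [mul_pos hb hd, mul_pos hb hc, mul_pos hc hd, sq_nonneg (b-d),
      mul_nonneg (mul_nonneg hb.le hd.le) (sub_nonneg.2 h'),
      mul_nonneg (sq_nonneg (b-d)) (sub_nonneg.2 h'), sq_nonneg (c^2-b*d),
      mul_nonneg hA (mul_pos hb hd).le]
  have hU : (0:ℝ) < (b+c)*(c+d) := by positivity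
  have hm := mul_le_mul_of_nonneg_left h2 hU.le
  nlinarith [sq_nonneg (((b+c)*(c+d)-2*b*d)^2 - (b+c)*(c+d)*(c^2+b*d)), hm]

private lemma sq13 {x : ℝ} (hx : 0 ≤ x) : (x^2) ^ ((1:ℝ)/3) = x ^ ((2:ℝ)/3) := by
  rw [← Real.rpow_natCast x 2, ← Real.rpow_mul hx]; norm_num

private lemma core {b c d e : ℝ} (hb : 0 < b) (hc : 0 < c) (hd : 0 < d) (he : 0 < e)
    (hbd : b*d = c*e) (hcond : d*(c+b) ≤ c*(c-b)) :
    b ^ ((4:ℝ)/3) + c ^ ((4:ℝ)/3) + d ^ ((4:ℝ)/3) + e ^ ((4:ℝ)/3)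
      ≤ (b+c+(d-e)) ^ ((4:ℝ)/3) := by
  have hbc : b < c := by nlinarith [mul_pos hd (by linarith : (0:ℝ) < c+b)]
  have hed : e < d := by nlinarith
  set L := b+c+(d-e) with hLdef
  have hL : 0 < L := by simp only [hLdef]; linarith
  have hce : c ^ ((4:ℝ)/3) * e ^ ((4:ℝ)/3) = b ^ ((4:ℝ)/3) * d ^ ((4:ℝ)/3) := by
    rw [← Real.mul_rpow hc.le he.le, ← Real.mul_rpow hb.le hd.le, hbd]
  have hfac : (b ^ ((4:ℝ)/3) + c ^ ((4:ℝ)/3)) * (c ^ ((4:ℝ)/3) + d ^ ((4:ℝ)/3))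
      = (b ^ ((4:ℝ)/3) + c ^ ((4:ℝ)/3) + d ^ ((4:ℝ)/3) + e ^ ((4:ℝ)/3)) * c ^ ((4:ℝ)/3) := by
    linear_combination -hce
  have H1 := holder43 hb.le hc.le
  have H2 := holder43 hc.le hd.le
  have hprod : (b ^ ((4:ℝ)/3) + c ^ ((4:ℝ)/3)) * (c ^ ((4:ℝ)/3) + d ^ ((4:ℝ)/3))
      ≤ ((b+c) ^ ((2:ℝ)/3) * ((b^2+c^2)) ^ ((1:ℝ)/3))
        * ((c+d) ^ ((2:ℝ)/3) * ((c^2+d^2)) ^ ((1:ℝ)/3)) := by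
    apply mul_le_mul H1 H2 (by positivity) (by positivity)
  -- rewrite RHS as ((b+c)^2*(c+d)^2*((b^2+c^2)*(c^2+d^2)))^(1/3)
  have hrw : ((b+c) ^ ((2:ℝ)/3) * ((b^2+c^2)) ^ ((1:ℝ)/3))
        * ((c+d) ^ ((2:ℝ)/3) * ((c^2+d^2)) ^ ((1:ℝ)/3))
      = ( ((b+c)*(c+d))^2 * ((b^2+c^2)*(c^2+d^2)) ) ^ ((1:ℝ)/3) := by
    rw [← sq13 (by positivity : (0:ℝ) ≤ b+c), ← sq13 (by positivity : (0:ℝ) ≤ c+d)]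
    rw [← Real.mul_rpow (by positivity) (by positivity),
      ← Real.mul_rpow (by positivity) (by positivity),
      ← Real.mul_rpow (by positivity) (by positivity)]
    congr 1
    ring
  have hpoly := poly_ineq hb hc hd hcond
  have hcL : c*(b+c+d) - b*d = c*L := by simp only [hLdef]; linear_combination -hbd
  rw [hcL] at hpoly
  have hcLpos : (0:ℝ) < c*L := by positivity
  have hmono : ( ((b+c)*(c+d))^2 * ((b^2+c^2)*(c^2+d^2)) ) ^ ((1:ℝ)/3)
      ≤ ((c*L)^4) ^ ((1:ℝ)/3) :=
    Real.rpow_le_rpow (by positivity) hpoly (by norm_num)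
  have hcl4 : ((c*L)^4) ^ ((1:ℝ)/3) = c ^ ((4:ℝ)/3) * L ^ ((4:ℝ)/3) := by
    rw [← Real.rpow_natCast (c*L) 4, ← Real.rpow_mul hcLpos.le,
      Real.mul_rpow hc.le hL.le]
    norm_num
  have hc43 : (0:ℝ) < c ^ ((4:ℝ)/3) := Real.rpow_pos_of_pos hc _
  have : (b ^ ((4:ℝ)/3) + c ^ ((4:ℝ)/3) + d ^ ((4:ℝ)/3) + e ^ ((4:ℝ)/3)) * c ^ ((4:ℝ)/3)
      ≤ L ^ ((4:ℝ)/3) * c ^ ((4:ℝ)/3) := by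
    rw [← hfac]
    calc (b ^ ((4:ℝ)/3) + c ^ ((4:ℝ)/3)) * (c ^ ((4:ℝ)/3) + d ^ ((4:ℝ)/3))
        ≤ ((b+c) ^ ((2:ℝ)/3) * ((b^2+c^2)) ^ ((1:ℝ)/3))
          * ((c+d) ^ ((2:ℝ)/3) * ((c^2+d^2)) ^ ((1:ℝ)/3)) := hprod
      _ = ( ((b+c)*(c+d))^2 * ((b^2+c^2)*(c^2+d^2)) ) ^ ((1:ℝ)/3) := hrw
      _ ≤ ((c*L)^4) ^ ((1:ℝ)/3) := hmono
      _ = c ^ ((4:ℝ)/3) * L ^ ((4:ℝ)/3) := hcl4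
      _ = L ^ ((4:ℝ)/3) * c ^ ((4:ℝ)/3) := by ring
  exact le_of_mul_le_mul_right this hc43

private lemma conj_div_norm_mul (u : ℂ) : (starRingEnd ℂ) u / (‖u‖:ℂ) * u = (‖u‖:ℂ) := by
  rcases eq_or_ne u 0 with h | h
  · simp [h]
  · have hn : (‖u‖:ℝ) ≠ 0 := norm_ne_zero_iff.2 h
    have hnc : (‖u‖:ℂ) ≠ 0 := by exact_mod_cast Complex.ofReal_ne_zero.2 hn
    have hmc : u * (starRingEnd ℂ) u = ((‖u‖^2 : ℝ) : ℂ) := by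
      rw [Complex.mul_conj, Complex.normSq_eq_norm_sq]
    calc (starRingEnd ℂ) u / (‖u‖:ℂ) * u = u * (starRingEnd ℂ) u / (‖u‖:ℂ) := by ring
      _ = ((‖u‖^2 : ℝ) : ℂ) / (‖u‖:ℂ) := by rw [hmc]
      _ = (‖u‖:ℂ) := by push_cast; rw [sq, mul_div_assoc, div_self hnc, mul_one]

private lemma lower_bound (a11 a12 a21 a22 : ℝ)
    (T : (Fin 2 → ℂ) →L[ℂ] (Fin 2 → ℂ) →L[ℂ] ℂ)
    (hT : ∀ z w : Fin 2 → ℂ,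
      T z w = (a11 : ℂ) * z 0 * w 0 + (a21 : ℂ) * z 1 * w 0
        + (a12 : ℂ) * z 0 * w 1 + (a22 : ℂ) * z 1 * w 1)
    {s : ℝ} (hs : s^2 ≤ 1) :
    Real.sqrt (a11^2+a12^2+2*(a11*a12)*s) + Real.sqrt (a21^2+a22^2+2*(a21*a22)*s) ≤ ‖T‖ := by
  have h1s : (0:ℝ) ≤ 1 - s^2 := by linarith
  set w1 : ℂ := (s:ℂ) + (Real.sqrt (1-s^2):ℂ) * Complex.I with hw1def
  have hw1re : w1.re = s := by simp [hw1def]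
  have hw1im : w1.im = Real.sqrt (1-s^2) := by simp [hw1def]
  have hw1norm : ‖w1‖ = 1 := by
    rw [Complex.norm_def, Complex.normSq_apply, hw1re, hw1im,
      Real.mul_self_sqrt h1s, show s*s + (1-s^2) = 1 by ring, Real.sqrt_one]
  set c0 : ℂ := (a11:ℂ) + (a12:ℂ)*w1 with hc0def
  set c1 : ℂ := (a21:ℂ) + (a22:ℂ)*w1 with hc1def
  have hnormsq : ∀ u v : ℝ, ‖(u:ℂ) + (v:ℂ)*w1‖ = Real.sqrt (u^2+v^2+2*(u*v)*s) := by
    intro u v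
    rw [Complex.norm_def]
    congr 1
    simp only [Complex.normSq_apply, Complex.add_re, Complex.add_im, Complex.mul_re,
      Complex.mul_im, Complex.ofReal_re, Complex.ofReal_im, hw1re, hw1im]
    nlinarith [Real.mul_self_sqrt h1s]
  have hnc0 : ‖c0‖ = Real.sqrt (a11^2+a12^2+2*(a11*a12)*s) := hnormsq a11 a12
  have hnc1 : ‖c1‖ = Real.sqrt (a21^2+a22^2+2*(a21*a22)*s) := hnormsq a21 a22
  set z : Fin 2 → ℂ := ![(starRingEnd ℂ) c0 / (‖c0‖:ℂ), (starRingEnd ℂ) c1 / (‖c1‖:ℂ)] with hzdef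
  set w : Fin 2 → ℂ := ![1, w1] with hwdef
  have hTzw : T z w = ((‖c0‖ + ‖c1‖ : ℝ) : ℂ) := by
    rw [hT]
    simp only [hzdef, hwdef, Matrix.cons_val_zero, Matrix.cons_val_one, Matrix.head_cons]
    have e0 := conj_div_norm_mul c0
    have e1 := conj_div_norm_mul c1
    push_cast
    rw [hc0def] at e0
    rw [hc1def] at e1
    linear_combination e0 + e1
  have hzn : ‖z‖ ≤ 1 := by
    rw [pi_norm_le_iff_of_nonneg zero_le_one, Fin.forall_fin_two]
    constructor <;>
      simp only [hzdef, Matrix.cons_val_zero, Matrix.cons_val_one, Matrix.head_cons] <;>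
      rw [norm_div, RCLike.norm_conj, Complex.norm_real, norm_norm] <;>
      exact div_self_le_one _
  have hwn : ‖w‖ ≤ 1 := by
    rw [pi_norm_le_iff_of_nonneg zero_le_one, Fin.forall_fin_two]
    constructor <;> simp [hwdef, hw1norm]
  have hTnn : ‖T z w‖ = ‖c0‖ + ‖c1‖ := by
    rw [hTzw, Complex.norm_real]
    exact abs_of_nonneg (by positivity)
  calc Real.sqrt (a11^2+a12^2+2*(a11*a12)*s) + Real.sqrt (a21^2+a22^2+2*(a21*a22)*s)
      = ‖T z w‖ := by rw [hTnn, hnc0, hnc1]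
    _ ≤ ‖T‖ * ‖z‖ * ‖w‖ := T.le_opNorm₂ z w
    _ ≤ ‖T‖ * 1 * 1 := by
        gcongr
    _ = ‖T‖ := by ring


private lemma lt_of_sq_lt_sq {P Q : ℝ} (hP : 0 ≤ P) (hQ : 0 < Q) (h : P^2 < Q^2) : P < Q := by
  nlinarith

private lemma key_d_gt_c {b c d e : ℝ} (hb : 0 < b) (hc : 0 < c) (hd : 0 < d) (he : 0 < e)
    (hbdce : b*d = c*e)
    (hND' : 2*b*c*(c^2+d^2) < (b^2+c^2)*(d^2-c^2)) :
    (c*(d+e))^2 < (d*(d-e))^2 := by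
  have hA : c^2*((e^2+d^2)*(d^2-c^2)) = d^2*((b^2+c^2)*(d^2-c^2)) := by
    linear_combination (-(d^2-c^2)*(c*e+b*d))*hbdce
  have hB : c^2*(2*e*d*(d^2+c^2)) = d^2*(2*b*c*(c^2+d^2)) := by
    linear_combination (-(2*(d^2+c^2)*c*d))*hbdce
  nlinarith [mul_lt_mul_of_pos_left hND' (mul_pos hd hd), hA, hB, mul_pos hc hc]

private lemma cond_transfer {b c d e : ℝ} (hb : 0 < b) (hc : 0 < c)
    (hbdce : b*d = c*e) (hlt : d*(c+b) < c*(b-c)) : e*(b+c) ≤ b*(b-c) := by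
  have hE : c*(e*(b+c)) = b*(d*(c+b)) := by linear_combination (-(b+c))*hbdce
  have hm := mul_lt_mul_of_pos_left hlt hb
  nlinarith [hE, hm, hc]

set_option maxHeartbeats 2000000 in
/-- Case (4) of Theorem 5.1: if `a₁₁a₂₁ > 0`, `a₁₂a₂₂ < 0` and `a₁₁a₂₁ + a₁₂a₂₂ = 0`, then the complex bilinear form with real coefficients satisfies Littlewood's 4/3 inequality with constant 1. -/
theorem littlewood_43_linf2_complex_case4
    (a11 a12 a21 a22 : ℝ)
    (T : (Fin 2 → ℂ) →L[ℂ] (Fin 2 → ℂ) →L[ℂ] ℂ)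
    (hT : ∀ z w : Fin 2 → ℂ,
      T z w = (a11 : ℂ) * z 0 * w 0 + (a21 : ℂ) * z 1 * w 0
        + (a12 : ℂ) * z 0 * w 1 + (a22 : ℂ) * z 1 * w 1)
    (h1 : a11 * a21 > 0) (h2 : a12 * a22 < 0) (h3 : a11 * a21 + a12 * a22 = 0) :
    (|a11| ^ ((4 : ℝ) / 3) + |a12| ^ ((4 : ℝ) / 3)
        + |a21| ^ ((4 : ℝ) / 3) + |a22| ^ ((4 : ℝ) / 3)) ^ ((3 : ℝ) / 4)
      ≤ ‖T‖ := by
  have h110 : a11*a21 ≠ 0 := ne_of_gt h1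
  have h120 : a12*a22 ≠ 0 := ne_of_lt h2
  set b := |a11| with hbdef
  set c := |a12| with hcdef
  set d := |a21| with hddef
  set e := |a22| with hedef
  have hb : 0 < b := abs_pos.2 (left_ne_zero_of_mul h110)
  have hc : 0 < c := abs_pos.2 (left_ne_zero_of_mul h120)
  have hd : 0 < d := abs_pos.2 (right_ne_zero_of_mul h110)
  have he : 0 < e := abs_pos.2 (right_ne_zero_of_mul h120)
  have hsq11 : a11^2 = b^2 := (sq_abs a11).symm
  have hsq12 : a12^2 = c^2 := (sq_abs a12).symm
  have hsq21 : a21^2 = d^2 := (sq_abs a21).symm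
  have hsq22 : a22^2 = e^2 := (sq_abs a22).symm
  have hprod1 : a11*a21 = b*d := by
    rw [hbdef, hddef, ← abs_mul]; exact (abs_of_pos h1).symm
  have hprod2 : a12*a22 = -(c*e) := by
    rw [hcdef, hedef, ← abs_mul, abs_of_neg h2]
    ring
  have hbdce : b*d = c*e := by linarith [hprod1, hprod2, h3]
  have hbcq : (a11*a12)^2 = (b*c)^2 := by
    rw [hbdef, hcdef, ← abs_mul]; exact (sq_abs _).symm
  have h2s' : (a21*a22)*(a11*a12) = -((b*c)*(d*e)) := by
    linear_combination (a12*a22)*hprod1 + (b*d)*hprod2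
  have hbc0 : b*c ≠ 0 := by positivity
  have hSnn : (0:ℝ) ≤ b ^ ((4:ℝ)/3) + c ^ ((4:ℝ)/3) + d ^ ((4:ℝ)/3) + e ^ ((4:ℝ)/3) := by
    have n1 := Real.rpow_nonneg hb.le ((4:ℝ)/3)
    have n2 := Real.rpow_nonneg hc.le ((4:ℝ)/3)
    have n3 := Real.rpow_nonneg hd.le ((4:ℝ)/3)
    have n4 := Real.rpow_nonneg he.le ((4:ℝ)/3)
    linarith
  have final : ∀ M : ℝ, 0 ≤ M →
      b ^ ((4:ℝ)/3) + c ^ ((4:ℝ)/3) + d ^ ((4:ℝ)/3) + e ^ ((4:ℝ)/3) ≤ M ^ ((4:ℝ)/3) →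
      M ≤ ‖T‖ →
      (b ^ ((4:ℝ)/3) + c ^ ((4:ℝ)/3) + d ^ ((4:ℝ)/3) + e ^ ((4:ℝ)/3)) ^ ((3:ℝ)/4) ≤ ‖T‖ := by
    intro M hM hSM hMT
    refine le_trans ?_ hMT
    calc (b ^ ((4:ℝ)/3) + c ^ ((4:ℝ)/3) + d ^ ((4:ℝ)/3) + e ^ ((4:ℝ)/3)) ^ ((3:ℝ)/4)
        ≤ (M ^ ((4:ℝ)/3)) ^ ((3:ℝ)/4) := Real.rpow_le_rpow hSnn hSM (by norm_num)
      _ = M := by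
          rw [← Real.rpow_mul hM]
          norm_num
  -- evaluation at real signs σ = ±1
  have eval : ∀ σ : ℝ, σ^2 = 1 → |b+σ*c| + |d-σ*e| ≤ ‖T‖ := by
    intro σ hσ
    have hs2 : ((a11*a12)/(b*c)*σ)^2 ≤ 1 := by
      rw [mul_pow, div_pow, hbcq, div_self (pow_ne_zero 2 hbc0), one_mul, hσ]
    have hlow := lower_bound a11 a12 a21 a22 T hT hs2
    have ht1 : 2*(a11*a12)*((a11*a12)/(b*c)*σ) = 2*(b*c)*σ := by
      field_simp
      linear_combination σ*hbcq
    have ht2 : 2*(a21*a22)*((a11*a12)/(b*c)*σ) = -(2*(d*e)*σ) := by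
      field_simp
      linear_combination σ*h2s'
    have hr1 : a11^2+a12^2+2*(a11*a12)*((a11*a12)/(b*c)*σ) = (b+σ*c)^2 := by
      rw [hsq11, hsq12, ht1]
      linear_combination (-(c^2))*hσ
    have hr2 : a21^2+a22^2+2*(a21*a22)*((a11*a12)/(b*c)*σ) = (d-σ*e)^2 := by
      rw [hsq21, hsq22, ht2]
      linear_combination (-(e^2))*hσ
    rw [hr1, hr2, Real.sqrt_sq_eq_abs, Real.sqrt_sq_eq_abs] at hlow
    exact hlow
  set s0 : ℝ := (b^2+c^2)*(c^2-d^2)/(2*b*c*(c^2+d^2)) with hs0def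
  by_cases hfeas : s0^2 ≤ 1
  · -- interior case
    have hs2 : ((a11*a12)/(b*c)*s0)^2 ≤ 1 := by
      rw [mul_pow, div_pow, hbcq, div_self (pow_ne_zero 2 hbc0), one_mul]
      exact hfeas
    have hlow := lower_bound a11 a12 a21 a22 T hT hs2
    have ht1 : 2*(a11*a12)*((a11*a12)/(b*c)*s0) = 2*(b*c)*s0 := by
      rw [show 2*(a11*a12)*((a11*a12)/(b*c)*s0) = 2*s0*((a11*a12)^2/(b*c)) by ring, hbcq,
        sq, mul_self_div_self]
      ring
    have ht2 : 2*(a21*a22)*((a11*a12)/(b*c)*s0) = -(2*(d*e)*s0) := by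
      rw [show 2*(a21*a22)*((a11*a12)/(b*c)*s0) = 2*s0*((a21*a22)*(a11*a12)/(b*c)) by ring, h2s',
        neg_div, mul_div_right_comm, div_self hbc0, one_mul]
      ring
    have hr1 : a11^2+a12^2+2*(a11*a12)*((a11*a12)/(b*c)*s0) = b^2+c^2+2*(b*c)*s0 := by
      rw [hsq11, hsq12, ht1]
    have hr2 : a21^2+a22^2+2*(a21*a22)*((a11*a12)/(b*c)*s0) = d^2+e^2-2*(d*e)*s0 := by
      rw [hsq21, hsq22, ht2]; ring
    rw [hr1, hr2] at hlow
    have he' : e = b*d/c := by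
      field_simp
      linarith [hbdce]
    set u := Real.sqrt (b^2+c^2) with hudef
    set v := Real.sqrt (c^2+d^2) with hvdef
    have hu2 : u^2 = b^2+c^2 := Real.sq_sqrt (by positivity)
    have hv2 : v^2 = c^2+d^2 := Real.sq_sqrt (by positivity)
    have hupos : 0 < u := by rw [hudef]; positivity
    have hvpos : 0 < v := by rw [hvdef]; positivity
    have h2' : (Real.sqrt 2)^2 = 2 := Real.sq_sqrt (by norm_num)
    have hx1 : (Real.sqrt 2*c*u/v)^2 = 2*c^2*u^2/v^2 := by
      rw [div_pow, mul_pow, mul_pow, h2']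
    have hx2 : (Real.sqrt 2*d^2*u/(c*v))^2 = 2*(d^2)^2*u^2/(c^2*v^2) := by
      rw [div_pow, mul_pow, mul_pow, mul_pow, h2']
    have hrad1 : b^2+c^2+2*(b*c)*s0 = (Real.sqrt 2*c*u/v)^2 := by
      rw [hx1, hu2, hv2, hs0def]
      field_simp
      ring
    have hrad2 : d^2+e^2-2*(d*e)*s0 = (Real.sqrt 2*d^2*u/(c*v))^2 := by
      rw [hx2, hu2, hv2, hs0def, he']
      field_simp
      ring
    have hsum : Real.sqrt (b^2+c^2+2*(b*c)*s0) + Real.sqrt (d^2+e^2-2*(d*e)*s0)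
        = Real.sqrt 2*u*v/c := by
      rw [hrad1, hrad2, Real.sqrt_sq (by positivity), Real.sqrt_sq (by positivity)]
      rw [div_add_div _ _ (ne_of_gt hvpos) (by positivity : c*v ≠ 0)]
      rw [div_eq_div_iff (by positivity : v*(c*v) ≠ 0) (by positivity : c ≠ 0)]
      linear_combination (-(Real.sqrt 2*c*u*v))*hv2
    rw [hsum] at hlow
    apply final (Real.sqrt 2*u*v/c) (by positivity) _ hlow
    have hid : 2*(b^2+c^2+d^2+e^2) = (Real.sqrt 2*u*v/c)^2 := by
      rw [div_pow, mul_pow, mul_pow, h2', hu2, hv2, he']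
      field_simp
      ring
    have hM43 : (Real.sqrt 2*u*v/c) ^ ((4:ℝ)/3)
        = (2*(b^2+c^2+d^2+e^2)) ^ ((2:ℝ)/3) := by
      rw [hid, sq23 (by positivity)]
    rw [hM43]
    exact sum4 hb.le hc.le hd.le he.le
  · -- boundary case
    push_neg at hfeas
    have hD : (0:ℝ) < 2*b*c*(c^2+d^2) := by positivity
    have hDN : (2*b*c*(c^2+d^2))^2 < ((b^2+c^2)*(c^2-d^2))^2 := by
      have h' : 1 < ((b^2+c^2)*(c^2-d^2))^2 / (2*b*c*(c^2+d^2))^2 := by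
        rw [← div_pow, ← hs0def]; exact hfeas
      have h'' := (one_lt_div (by positivity : (0:ℝ) < (2*b*c*(c^2+d^2))^2)).1 h'
      linarith
    have hev1 := eval 1 (by norm_num)
    have hevm := eval (-1) (by norm_num)
    have hev1' : (b+c) + |d-e| ≤ ‖T‖ := by
      have hbc : b+1*c = b+c := by ring
      have hde : d-1*e = d-e := by ring
      rw [hbc, hde, abs_of_pos (by linarith : (0:ℝ) < b+c)] at hev1
      exact hev1
    have hevm' : |b-c| + (d+e) ≤ ‖T‖ := by
      have hbc : b+(-1)*c = b-c := by ring
      have hde : d-(-1)*e = d+e := by ring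
      rw [hbc, hde, abs_of_pos (by linarith : (0:ℝ) < d+e)] at hevm
      exact hevm
    rcases lt_trichotomy c d with hcd | hcd | hcd
    · -- d > c
      have hN'pos : (0:ℝ) < (b^2+c^2)*(d^2-c^2) := by
        have h5 : c*c < d*d := mul_self_lt_mul_self hc.le hcd
        have : (0:ℝ) < d^2-c^2 := by rw [sq, sq]; linarith
        positivity
      have hND' : 2*b*c*(c^2+d^2) < (b^2+c^2)*(d^2-c^2) := by
        have hflip : ((b^2+c^2)*(c^2-d^2))^2 = ((b^2+c^2)*(d^2-c^2))^2 := by ring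
        rw [hflip] at hDN
        exact lt_of_sq_lt_sq hD.le hN'pos hDN
      have hkey : (c*(d+e))^2 < (d*(d-e))^2 := key_d_gt_c hb hc hd he hbdce hND' 
      rcases lt_trichotomy e d with hed | hed | hed
      · -- e < d, hence b < c
        have hcond : c*(d+e) ≤ d*(d-e) :=
          (lt_of_sq_lt_sq (by positivity) (mul_pos hd (show (0:ℝ) < d-e by linarith)) hkey).le
        have hbc' : b < c := by
          have h5 : c*e < c*d := (mul_lt_mul_iff_right₀ hc).2 hed
          rw [← hbdce] at h5
          exact lt_of_mul_lt_mul_right h5 hd.le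
        have hcore := core he hd hc hb (by linear_combination -hbdce) hcond
        refine final (e+d+(c-b)) (by linarith) (by linarith [hcore]) ?_
        have h1' : c-b ≤ |b-c| := by
          rw [abs_sub_comm]; exact le_abs_self _
        linarith [hevm', h1']
      · -- e = d forces contradiction
        exfalso
        rw [hed] at hkey
        have hz : (d*(d-d))^2 = 0 := by ring
        rw [hz] at hkey
        linarith [sq_nonneg (c*(d+d))]
      · -- e > d, hence b > c
        have hlt : c*(d+e) < d*(e-d) := by
          have hflip : (d*(d-e))^2 = (d*(e-d))^2 := by ring
          rw [hflip] at hkey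
          exact lt_of_sq_lt_sq (by positivity) (mul_pos hd (show (0:ℝ) < e-d by linarith)) hkey
        have hcond2 : b*(e+d) ≤ e*(e-d) :=
          cond_transfer (b := e) (c := d) (d := c) (e := b) he hd
            (by linear_combination -hbdce) hlt
        have hbc' : c < b := by
          have h5 : c*d < c*e := (mul_lt_mul_iff_right₀ hc).2 hed
          rw [← hbdce] at h5
          exact lt_of_mul_lt_mul_right h5 hd.le
        have hcore := core hd he hb hc (by linear_combination hbdce) hcond2
        refine final (d+e+(b-c)) (by linarith) (by linarith [hcore]) ?_
        linarith [hevm', le_abs_self (b-c)]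
    · -- c = d impossible
      exfalso
      rw [hcd] at hDN
      have hz : ((b^2+d^2)*(d^2-d^2))^2 = 0 := by ring
      rw [hz] at hDN
      linarith [sq_nonneg (2*b*d*(d^2+d^2))]
    · -- c > d
      have hN'pos : (0:ℝ) < (b^2+c^2)*(c^2-d^2) := by
        have h5 : d*d < c*c := mul_self_lt_mul_self hd.le hcd
        have : (0:ℝ) < c^2-d^2 := by rw [sq, sq]; linarith
        positivity
      have hND' : 2*b*c*(c^2+d^2) < (b^2+c^2)*(c^2-d^2) :=
        lt_of_sq_lt_sq hD.le hN'pos hDN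
      have hkey : (d*(c+b))^2 < (c*(c-b))^2 := by linarith [hND', sq_nonneg (c*(c-b)), sq_nonneg (d*(c+b))]
      rcases lt_trichotomy b c with hbc' | hbc' | hbc'
      · -- b < c
        have hcond : d*(c+b) ≤ c*(c-b) :=
          (lt_of_sq_lt_sq (by positivity) (mul_pos hc (show (0:ℝ) < c-b by linarith)) hkey).le
        have hed : e < d := by
          have h5 : b*d < c*d := mul_lt_mul_of_pos_right hbc' hd
          rw [hbdce] at h5
          exact lt_of_mul_lt_mul_left h5 hc.le
        have hcore := core hb hc hd he hbdce hcond
        refine final (b+c+(d-e)) (by linarith) (by linarith [hcore]) ?_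
        linarith [hev1', le_abs_self (d-e)]
      · -- b = c forces contradiction
        exfalso
        rw [hbc'] at hkey
        have hz : (c*(c-c))^2 = 0 := by ring
        rw [hz] at hkey
        linarith [sq_nonneg (d*(c+c))]
      · -- b > c
        have hlt : d*(c+b) < c*(b-c) := by
          have hflip : (c*(c-b))^2 = (c*(b-c))^2 := by ring
          rw [hflip] at hkey
          exact lt_of_sq_lt_sq (by positivity) (mul_pos hc (show (0:ℝ) < b-c by linarith)) hkey
        have hcond2 : e*(b+c) ≤ b*(b-c) := cond_transfer hb hc hbdce hlt
        have hed : d < e := by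
          have h5 : c*d < b*d := mul_lt_mul_of_pos_right hbc' hd
          rw [hbdce] at h5
          exact lt_of_mul_lt_mul_left h5 hc.le
        have hcore := core hc hb he hd hbdce.symm hcond2
        refine final (c+b+(e-d)) (by linarith) (by linarith [hcore]) ?_
        have h1' : e-d ≤ |d-e| := by
          rw [abs_sub_comm]; exact le_abs_self _
        linarith [hev1', h1']
end

section
/- Let T : ℓ∞²(ℂ) × ℓ∞²(ℂ) → ℂ be the bilinear form T(z,w) = Σ_{i,j=1}^{2} a_{ij}z_iw_j with real coefficients a_{ij}. If a₁₁a₂₁ < 0, a₁₂a₂₂ > 0 and a₁₁a₂₁ + a₁₂a₂₂ = 0, then (Σ_{i,j=1}^{2} |a_{ij}|^{4/3})^{3/4} ≤ ‖T‖. -/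
lemma cubert_cube {t : ℝ} (ht : 0 ≤ t) : (t ^ ((1:ℝ)/3)) ^ (3:ℕ) = t := by
  rw [← Real.rpow_natCast (t ^ ((1:ℝ)/3)) 3, ← Real.rpow_mul ht]
  norm_num

lemma cubert_sq {t : ℝ} (ht : 0 ≤ t) : (t ^ ((1:ℝ)/3)) ^ (2:ℕ) = t ^ ((2:ℝ)/3) := by
  rw [← Real.rpow_natCast (t ^ ((1:ℝ)/3)) 2, ← Real.rpow_mul ht]
  norm_num

lemma rpow43_s14 {t : ℝ} (ht : 0 ≤ t) : t ^ ((4:ℝ)/3) = (t ^ ((1:ℝ)/3)) ^ (4:ℕ) := by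
  rw [← Real.rpow_natCast (t ^ ((1:ℝ)/3)) 4, ← Real.rpow_mul ht]
  norm_num

lemma pcore1 {A D : ℝ} (hA : 0 ≤ A) (h : A ≤ D) :
    A^4 + (4/3) * A * (D^3 - A^3) ≤ D^4 := by
  nlinarith [sq_nonneg (D - A), sq_nonneg D, sq_nonneg A, mul_nonneg hA (hA.trans h),
    mul_nonneg (mul_nonneg hA hA) (sq_nonneg (D-A)), mul_nonneg (hA.trans h) (sq_nonneg (D-A)),
    mul_nonneg (mul_nonneg (hA.trans h) (hA.trans h)) (sq_nonneg (D-A))]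

lemma bern {t d : ℝ} (ht : 0 ≤ t) (hd : 0 ≤ d) :
    t^((4:ℝ)/3) + (4/3) * t^((1:ℝ)/3) * d ≤ (t+d)^((4:ℝ)/3) := by
  have htd : (0:ℝ) ≤ t + d := by linarith
  have hA : (0:ℝ) ≤ t ^ ((1:ℝ)/3) := Real.rpow_nonneg ht _
  have hAD : t^((1:ℝ)/3) ≤ (t+d)^((1:ℝ)/3) :=
    Real.rpow_le_rpow ht (by linarith) (by norm_num)
  have h := pcore1 hA hAD
  rw [cubert_cube ht, cubert_cube htd] at h
  rw [rpow43_s14 ht, rpow43_s14 htd]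
  linarith

lemma pcore2 {A B : ℝ} (hA : 0 ≤ A) (hB : 0 ≤ B) :
    (A^2 + B^2)^3 ≤ 2 * (A^3 + B^3)^2 := by
  nlinarith [sq_nonneg (A - B), mul_nonneg hA hB, sq_nonneg (A+B), sq_nonneg (A*B),
    mul_nonneg (mul_nonneg hA hA) (mul_nonneg hB hB),
    mul_nonneg (mul_nonneg hA hB) (sq_nonneg (A-B)),
    mul_nonneg (mul_nonneg (mul_nonneg hA hB) hA) hB,
    mul_nonneg (mul_nonneg hA hA) (sq_nonneg (A-B)),
    mul_nonneg (mul_nonneg hB hB) (sq_nonneg (A-B))]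

lemma q23 {s t : ℝ} (hs : 0 ≤ s) (ht : 0 ≤ t) :
    s^((2:ℝ)/3) + t^((2:ℝ)/3) ≤ 2^((1:ℝ)/3) * (s+t)^((2:ℝ)/3) := by
  have hst : (0:ℝ) ≤ s + t := by linarith
  have hL : (0:ℝ) ≤ s^((2:ℝ)/3) + t^((2:ℝ)/3) := by positivity
  have hR : (0:ℝ) ≤ 2^((1:ℝ)/3) * (s+t)^((2:ℝ)/3) := by positivity
  have key : (s^((2:ℝ)/3) + t^((2:ℝ)/3))^(3:ℕ) ≤ (2^((1:ℝ)/3) * (s+t)^((2:ℝ)/3))^(3:ℕ) := by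
    have h := pcore2 (Real.rpow_nonneg hs ((1:ℝ)/3)) (Real.rpow_nonneg ht ((1:ℝ)/3))
    rw [cubert_sq hs, cubert_sq ht, cubert_cube hs, cubert_cube ht] at h
    have e1 : (2^((1:ℝ)/3) * (s+t)^((2:ℝ)/3))^(3:ℕ) = 2 * (s+t)^2 := by
      rw [mul_pow, cubert_cube (by norm_num : (0:ℝ) ≤ 2)]
      congr 1
      rw [← Real.rpow_natCast ((s+t)^((2:ℝ)/3)) 3, ← Real.rpow_mul hst,
        ← Real.rpow_natCast (s+t) 2]
      norm_num
    rw [e1]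
    exact h
  exact (pow_le_pow_iff_left₀ hL hR (by norm_num)).1 key

lemma pcore3 {a b c : ℝ} (ha : 0 ≤ a) (hb : 0 ≤ b) (hc : 0 ≤ c)
    (h3 : c^3 = a^3 + b^3) :
    (a^4 + b^4) * c^2 + (2/3) * (a^3 * b^3) ≤ c^6 := by
  have hac : a ≤ c := by
    have h : a^3 ≤ c^3 := by nlinarith [pow_nonneg hb 3]
    exact (pow_le_pow_iff_left₀ ha hc (by norm_num)).1 h
  have hbc : b ≤ c := by
    have h : b^3 ≤ c^3 := by nlinarith [pow_nonneg ha 3]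
    exact (pow_le_pow_iff_left₀ hb hc (by norm_num)).1 h
  have ca : 0 ≤ c - a := sub_nonneg.2 hac
  have cb : 0 ≤ c - b := sub_nonneg.2 hbc
  have e1 : b^3 ≤ 3*c^2*(c-a) := by
    nlinarith [mul_nonneg (mul_nonneg ha ha) ca, mul_nonneg (mul_nonneg ha hc) ca,
      mul_nonneg (sq_nonneg (c-a)) ca]
  have e2 : a^3 ≤ 3*c^2*(c-b) := by
    nlinarith [mul_nonneg (mul_nonneg hb hb) cb, mul_nonneg (mul_nonneg hb hc) cb,
      mul_nonneg (sq_nonneg (c-b)) cb]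
  have m1 : a^3 * b^3 ≤ a^3 * (3*c^2*(c-a)) :=
    mul_le_mul_of_nonneg_left e1 (pow_nonneg ha 3)
  have m2 : b^3 * a^3 ≤ b^3 * (3*c^2*(c-b)) :=
    mul_le_mul_of_nonneg_left e2 (pow_nonneg hb 3)
  have h6 : c^3*c^3 = (a^3+b^3)*c^3 := by rw [h3]
  nlinarith [m1, m2, h6]

lemma keyA {x y u v : ℝ} (hx : 0 ≤ x) (hy : 0 ≤ y) (hu : 0 ≤ u) (hv : 0 ≤ v) :
    x^((4:ℝ)/3) + y^((4:ℝ)/3) + u^((4:ℝ)/3) + v^((4:ℝ)/3)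
      ≤ (Real.sqrt (2*(x^2+y^2+u^2+v^2)))^((4:ℝ)/3) := by
  have e43 : ∀ t : ℝ, 0 ≤ t → t^((4:ℝ)/3) = (t^2)^((2:ℝ)/3) := by
    intro t ht
    rw [← Real.rpow_natCast t 2, ← Real.rpow_mul ht]
    norm_num
  have hS : (0:ℝ) ≤ x^2+y^2+u^2+v^2 := by positivity
  have h1 : x^((4:ℝ)/3) + y^((4:ℝ)/3) ≤ 2^((1:ℝ)/3) * (x^2+y^2)^((2:ℝ)/3) := by
    rw [e43 x hx, e43 y hy]; exact q23 (sq_nonneg x) (sq_nonneg y)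
  have h2 : u^((4:ℝ)/3) + v^((4:ℝ)/3) ≤ 2^((1:ℝ)/3) * (u^2+v^2)^((2:ℝ)/3) := by
    rw [e43 u hu, e43 v hv]; exact q23 (sq_nonneg u) (sq_nonneg v)
  have h3 : (x^2+y^2)^((2:ℝ)/3) + (u^2+v^2)^((2:ℝ)/3)
      ≤ 2^((1:ℝ)/3) * (x^2+y^2+u^2+v^2)^((2:ℝ)/3) := by
    have := q23 (by positivity : (0:ℝ) ≤ x^2+y^2) (by positivity : (0:ℝ) ≤ u^2+v^2)
    convert this using 3 <;> ring
  have hRHS : (Real.sqrt (2*(x^2+y^2+u^2+v^2)))^((4:ℝ)/3)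
      = 2^((2:ℝ)/3) * (x^2+y^2+u^2+v^2)^((2:ℝ)/3) := by
    rw [Real.sqrt_eq_rpow, ← Real.rpow_mul (by positivity),
      show ((1:ℝ)/2 * ((4:ℝ)/3)) = (2:ℝ)/3 by norm_num,
      Real.mul_rpow (by norm_num) hS]
  have h222 : (2:ℝ)^((1:ℝ)/3) * 2^((1:ℝ)/3) = 2^((2:ℝ)/3) := by
    rw [← Real.rpow_add (by norm_num)]
    norm_num
  have h2pos : (0:ℝ) ≤ (2:ℝ)^((1:ℝ)/3) := by positivity
  rw [hRHS]
  calc x^((4:ℝ)/3) + y^((4:ℝ)/3) + u^((4:ℝ)/3) + v^((4:ℝ)/3)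
      ≤ 2^((1:ℝ)/3) * ((x^2+y^2)^((2:ℝ)/3) + (u^2+v^2)^((2:ℝ)/3)) := by
        rw [mul_add]; linarith
    _ ≤ 2^((1:ℝ)/3) * (2^((1:ℝ)/3) * (x^2+y^2+u^2+v^2)^((2:ℝ)/3)) :=
        mul_le_mul_of_nonneg_left h3 h2pos
    _ = 2^((2:ℝ)/3) * (x^2+y^2+u^2+v^2)^((2:ℝ)/3) := by rw [← mul_assoc, h222]

lemma keyB {x y u v : ℝ} (hy : 0 < y) (hyx : y ≤ x) (hu : 0 < u) (hv : 0 < v)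
    (hprod : x*y = u*v) (hord : u + v ≤ x - y) :
    x^((4:ℝ)/3) + y^((4:ℝ)/3) + u^((4:ℝ)/3) + v^((4:ℝ)/3)
      ≤ (x - y + (u+v))^((4:ℝ)/3) := by
  have hx : 0 < x := lt_of_lt_of_le hy hyx
  set m := u + v with hm
  clear_value m
  have hm0 : 0 < m := by rw [hm]; positivity
  have hxmy : y + m ≤ x := by linarith
  have huv_ge : y*(y+m) ≤ u*v := by nlinarith
  have hm2 : m^2 = (u+v)^2 := by rw [hm]
  have h4 : 4*(y*(y+m)) ≤ m^2 := by nlinarith [sq_nonneg (u-v)]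
  have hym : 125*y ≤ 27*m := by nlinarith [mul_pos hy hm0, sq_nonneg y]
  have hmy : 0 ≤ m - y := by linarith
  -- cube root facts
  have hm13 : (0:ℝ) < m^((1:ℝ)/3) := Real.rpow_pos_of_pos hm0 _
  have hm23 : (0:ℝ) < m^((2:ℝ)/3) := Real.rpow_pos_of_pos hm0 _
  -- y^{4/3} ≤ (3/5) y m^{1/3}
  have y43 : y^((4:ℝ)/3) ≤ (3/5)*y*m^((1:ℝ)/3) := by
    have h1 : y ≤ (27/125)*m := by linarith
    have h2 : y^((1:ℝ)/3) ≤ ((27/125)*m)^((1:ℝ)/3) :=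
      Real.rpow_le_rpow hy.le h1 (by norm_num)
    have h3 : ((27/125)*m)^((1:ℝ)/3) = (3/5)*m^((1:ℝ)/3) := by
      rw [Real.mul_rpow (by norm_num) hm0.le]
      congr 1
      rw [show (27:ℝ)/125 = ((3:ℝ)/5)^(3:ℕ) by norm_num,
        ← Real.rpow_natCast ((3:ℝ)/5) 3, ← Real.rpow_mul (by norm_num)]
      norm_num
    have e : y^((4:ℝ)/3) = y * y^((1:ℝ)/3) := by
      rw [show (4:ℝ)/3 = 1 + 1/3 by norm_num, Real.rpow_add hy, Real.rpow_one]
    rw [e]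
    calc y * y^((1:ℝ)/3) ≤ y * ((3/5)*m^((1:ℝ)/3)) := by
          apply mul_le_mul_of_nonneg_left _ hy.le
          rw [← h3]; exact h2
      _ = (3/5)*y*m^((1:ℝ)/3) := by ring
  -- (u^{4/3}+v^{4/3}) m^{2/3} + (2/3) uv ≤ m^2
  have L1 : (u^((4:ℝ)/3) + v^((4:ℝ)/3)) * m^((2:ℝ)/3) + (2/3)*(u*v) ≤ m^2 := by
    have h := pcore3 (Real.rpow_nonneg hu.le ((1:ℝ)/3))
      (Real.rpow_nonneg hv.le ((1:ℝ)/3)) (Real.rpow_nonneg hm0.le ((1:ℝ)/3))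
      (by rw [cubert_cube hu.le, cubert_cube hv.le, cubert_cube hm0.le]; exact hm)
    rw [cubert_cube hu.le, cubert_cube hv.le, cubert_sq hm0.le] at h
    rw [← rpow43_s14 hu.le, ← rpow43_s14 hv.le] at h
    have h6 : (m^((1:ℝ)/3))^(6:ℕ) = m^2 := by
      rw [show ((m:ℝ)^((1:ℝ)/3))^(6:ℕ) = ((m^((1:ℝ)/3))^(3:ℕ))^(2:ℕ) by ring,
        cubert_cube hm0.le]
    rw [h6] at h
    linarith
  -- u^{4/3}+v^{4/3} ≤ m^{4/3} - (2/3) y m^{1/3}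
  have huvm : y*m ≤ u*v := by nlinarith
  have P : u^((4:ℝ)/3) + v^((4:ℝ)/3) ≤ m^((4:ℝ)/3) - (2/3)*y*m^((1:ℝ)/3) := by
    rw [← mul_le_mul_iff_of_pos_right hm23]
    have e1 : (m^((4:ℝ)/3) - (2/3)*y*m^((1:ℝ)/3)) * m^((2:ℝ)/3)
        = m^2 - (2/3)*(y*m) := by
      have a1 : m^((4:ℝ)/3) * m^((2:ℝ)/3) = m^2 := by
        rw [← Real.rpow_add hm0, ← Real.rpow_natCast m 2]
        norm_num
      have a2 : m^((1:ℝ)/3) * m^((2:ℝ)/3) = m := by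
        rw [← Real.rpow_add hm0]
        norm_num
      calc (m^((4:ℝ)/3) - (2/3)*y*m^((1:ℝ)/3)) * m^((2:ℝ)/3)
          = m^((4:ℝ)/3) * m^((2:ℝ)/3) - (2/3)*y*(m^((1:ℝ)/3) * m^((2:ℝ)/3)) := by ring
        _ = m^2 - (2/3)*(y*m) := by rw [a1, a2]; ring
    rw [e1]
    linarith
  -- combine: y^{4/3}+u^{4/3}+v^{4/3} ≤ (4/3) x^{1/3} (m-y)
  have em : m^((4:ℝ)/3) = m * m^((1:ℝ)/3) := by
    rw [show (4:ℝ)/3 = 1 + 1/3 by norm_num, Real.rpow_add hm0, Real.rpow_one]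
  have key2 : m^((4:ℝ)/3) - (1/15)*y*m^((1:ℝ)/3) ≤ (4/3)*m^((1:ℝ)/3)*(m-y) := by
    have h0 : 0 ≤ m^((1:ℝ)/3) * ((1/3)*m - (19/15)*y) :=
      mul_nonneg hm13.le (by linarith)
    rw [em]
    nlinarith [h0]
  have hmx13 : m^((1:ℝ)/3) ≤ x^((1:ℝ)/3) :=
    Real.rpow_le_rpow hm0.le (by linarith) (by norm_num)
  have key3 : (4/3)*m^((1:ℝ)/3)*(m-y) ≤ (4/3)*x^((1:ℝ)/3)*(m-y) := by
    apply mul_le_mul_of_nonneg_right _ hmy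
    linarith
  have hb := bern hx.le hmy
  have efin : x + (m - y) = x - y + m := by ring
  rw [efin] at hb
  linarith

lemma phase_mul (c : ℂ) :
    c * ((starRingEnd ℂ) c / ((‖c‖ : ℝ) : ℂ)) = ((‖c‖ : ℝ) : ℂ) := by
  by_cases hc : c = 0
  · simp [hc]
  · have habs : ‖c‖ ≠ 0 := norm_ne_zero_iff.mpr hc
    have habs' : ((‖c‖ : ℝ) : ℂ) ≠ 0 := by exact_mod_cast habs
    field_simp
    rw [Complex.mul_conj, ← Complex.sq_norm]
    push_cast
    ring

lemma phase_norm_le (c : ℂ) :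
    ‖(starRingEnd ℂ) c / ((‖c‖ : ℝ) : ℂ)‖ ≤ 1 := by
  rw [norm_div, Complex.norm_conj, Complex.norm_real, Real.norm_eq_abs,
    abs_of_nonneg (norm_nonneg c)]
  exact div_self_le_one _

lemma lower {a11 a12 a21 a22 : ℝ} {T : (Fin 2 → ℂ) →L[ℂ] (Fin 2 → ℂ) →L[ℂ] ℂ}
    (hT : ∀ z w : Fin 2 → ℂ,
      T z w = (a11 : ℂ) * z 0 * w 0 + (a21 : ℂ) * z 1 * w 0
        + (a12 : ℂ) * z 0 * w 1 + (a22 : ℂ) * z 1 * w 1)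
    (z0 z1 : ℂ) (h0 : ‖z0‖ ≤ 1) (h1 : ‖z1‖ ≤ 1) :
    ‖(a11:ℂ)*z0 + (a21:ℂ)*z1‖ + ‖(a12:ℂ)*z0 + (a22:ℂ)*z1‖ ≤ ‖T‖ := by
  set c1 : ℂ := (a11:ℂ)*z0 + (a21:ℂ)*z1 with hc1
  set c2 : ℂ := (a12:ℂ)*z0 + (a22:ℂ)*z1 with hc2
  set w0 : ℂ := (starRingEnd ℂ) c1 / ((‖c1‖ : ℝ) : ℂ) with hw0
  set w1 : ℂ := (starRingEnd ℂ) c2 / ((‖c2‖ : ℝ) : ℂ) with hw1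
  have hval : T ![z0,z1] ![w0,w1] = ((‖c1‖ + ‖c2‖ : ℝ) : ℂ) := by
    rw [hT]
    simp only [Matrix.cons_val_zero, Matrix.cons_val_one, Matrix.head_cons]
    have e : (a11:ℂ)*z0*w0 + (a21:ℂ)*z1*w0 + (a12:ℂ)*z0*w1 + (a22:ℂ)*z1*w1
        = c1*w0 + c2*w1 := by rw [hc1, hc2]; ring
    rw [e, hw0, hw1, phase_mul c1, phase_mul c2]
    push_cast
    ring
  have hzn : ‖![z0,z1]‖ ≤ 1 := by
    rw [pi_norm_le_iff_of_nonneg zero_le_one]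
    intro i
    fin_cases i <;> simpa
  have hwn : ‖![w0,w1]‖ ≤ 1 := by
    rw [pi_norm_le_iff_of_nonneg zero_le_one]
    intro i
    fin_cases i
    · show ‖![w0,w1] 0‖ ≤ 1
      simp only [Matrix.cons_val_zero, hw0]
      exact phase_norm_le c1
    · show ‖![w0,w1] 1‖ ≤ 1
      simp only [Matrix.cons_val_one, Matrix.head_cons, hw1]
      exact phase_norm_le c2
  have hb := T.le_opNorm₂ ![z0,z1] ![w0,w1]
  rw [hval] at hb
  have habs : ‖(((‖c1‖ + ‖c2‖ : ℝ)) : ℂ)‖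
      = ‖c1‖ + ‖c2‖ := by
    rw [Complex.norm_real]
    exact abs_of_nonneg (by positivity)
  rw [habs] at hb
  have hTn : 0 ≤ ‖T‖ := T.opNorm_nonneg
  calc ‖c1‖ + ‖c2‖ ≤ ‖T‖ * ‖![z0,z1]‖ * ‖![w0,w1]‖ := hb
    _ ≤ ‖T‖ * 1 * 1 := by
        apply mul_le_mul _ hwn (norm_nonneg _) (by linarith)
        exact mul_le_mul_of_nonneg_left hzn hTn
    _ = ‖T‖ := by ring

lemma rpow_finish {s M N : ℝ} (hs : 0 ≤ s) (hM : 0 ≤ M)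
    (h : s ≤ M^((4:ℝ)/3)) (h2 : M ≤ N) : s^((3:ℝ)/4) ≤ N := by
  have h3 : s^((3:ℝ)/4) ≤ (M^((4:ℝ)/3))^((3:ℝ)/4) :=
    Real.rpow_le_rpow hs h (by norm_num)
  have e : (M^((4:ℝ)/3))^((3:ℝ)/4) = M := by
    rw [← Real.rpow_mul hM]
    norm_num
  rw [e] at h3
  linarith

set_option maxHeartbeats 2000000 in
/-- Case (5) of Theorem 5.1: if `a₁₁a₂₁ < 0`, `a₁₂a₂₂ > 0` and `a₁₁a₂₁ + a₁₂a₂₂ = 0`, then the complex bilinear form with real coefficients satisfies Littlewood's 4/3 inequality with constant 1. -/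
theorem littlewood_43_linf2_complex_case5
    (a11 a12 a21 a22 : ℝ)
    (T : (Fin 2 → ℂ) →L[ℂ] (Fin 2 → ℂ) →L[ℂ] ℂ)
    (hT : ∀ z w : Fin 2 → ℂ,
      T z w = (a11 : ℂ) * z 0 * w 0 + (a21 : ℂ) * z 1 * w 0
        + (a12 : ℂ) * z 0 * w 1 + (a22 : ℂ) * z 1 * w 1)
    (h1 : a11 * a21 < 0) (h2 : a12 * a22 > 0) (h3 : a11 * a21 + a12 * a22 = 0) :
    (|a11| ^ ((4 : ℝ) / 3) + |a12| ^ ((4 : ℝ) / 3)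
        + |a21| ^ ((4 : ℝ) / 3) + |a22| ^ ((4 : ℝ) / 3)) ^ ((3 : ℝ) / 4)
      ≤ ‖T‖ := by
  set x := |a11| with hxd
  set y := |a21| with hyd
  set u := |a12| with hud
  set v := |a22| with hvd
  have ha11 : a11 ≠ 0 := left_ne_zero_of_mul (ne_of_lt h1)
  have ha21 : a21 ≠ 0 := right_ne_zero_of_mul (ne_of_lt h1)
  have ha12 : a12 ≠ 0 := left_ne_zero_of_mul (ne_of_gt h2)
  have ha22 : a22 ≠ 0 := right_ne_zero_of_mul (ne_of_gt h2)
  have hx : 0 < x := abs_pos.2 ha11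
  have hy : 0 < y := abs_pos.2 ha21
  have hu : 0 < u := abs_pos.2 ha12
  have hv : 0 < v := abs_pos.2 ha22
  have e11 : a11^2 = x^2 := (sq_abs a11).symm
  have e21 : a21^2 = y^2 := (sq_abs a21).symm
  have e12 : a12^2 = u^2 := (sq_abs a12).symm
  have e22 : a22^2 = v^2 := (sq_abs a22).symm
  have ha : a11 * a21 = -(x*y) := by
    rw [hxd, hyd, ← abs_mul]
    rw [abs_of_neg h1]
    ring
  have hb : a12 * a22 = u*v := by
    rw [hud, hvd, ← abs_mul]
    rw [abs_of_pos h2]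
  have hprod : x*y = u*v := by
    rw [← hb]; linarith
  clear_value x y u v
  have hs : 0 ≤ (3:ℝ) := by norm_num
  -- goal sum nonneg
  have hsum0 : (0:ℝ) ≤ x ^ ((4:ℝ)/3) + u ^ ((4:ℝ)/3) + y ^ ((4:ℝ)/3) + v ^ ((4:ℝ)/3) := by
    positivity
  by_cases hB : u + v ≤ |x - y|
  · -- endpoint z1 = 1
    have hlow := lower hT 1 1 (by simp) (by simp)
    have ea : (a11:ℂ)*1 + (a21:ℂ)*1 = ((a11 + a21 : ℝ) : ℂ) := by push_cast; ring
    have eb : (a12:ℂ)*1 + (a22:ℂ)*1 = ((a12 + a22 : ℝ) : ℂ) := by push_cast; ring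
    rw [ea, eb, Complex.norm_real, Real.norm_eq_abs, Complex.norm_real, Real.norm_eq_abs] at hlow
    have q1 : |a11 + a21| = |x - y| := by
      rw [← Real.sqrt_sq_eq_abs, ← Real.sqrt_sq_eq_abs]
      congr 1
      linear_combination e11 + e21 + 2*ha
    have q2 : |a12 + a22| = u + v := by
      rw [← Real.sqrt_sq_eq_abs, show (a12+a22)^2 = (u+v)^2 by
        linear_combination e12 + e22 + 2*hb]
      rw [Real.sqrt_sq (by positivity)]
    rw [q1, q2] at hlow
    rcases le_total y x with hyx | hxy
    · have habs : |x - y| = x - y := abs_of_nonneg (by linarith)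
      rw [habs] at hlow hB
      have hk := keyB hy hyx hu hv hprod hB
      refine rpow_finish hsum0 (by linarith) ?_ hlow
      linarith
    · have habs : |x - y| = y - x := by
        rw [abs_sub_comm]; exact abs_of_nonneg (by linarith)
      rw [habs] at hlow hB
      have hk := keyB hx hxy hu hv (by linarith [hprod]) hB
      refine rpow_finish hsum0 (by linarith) ?_ hlow
      linarith
  · by_cases hC : x + y ≤ |u - v|
    · -- endpoint z1 = -1
      have hlow := lower hT 1 (-1) (by simp) (by simp)
      have ea : (a11:ℂ)*1 + (a21:ℂ)*(-1) = ((a11 - a21 : ℝ) : ℂ) := by push_cast; ring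
      have eb : (a12:ℂ)*1 + (a22:ℂ)*(-1) = ((a12 - a22 : ℝ) : ℂ) := by push_cast; ring
      rw [ea, eb, Complex.norm_real, Real.norm_eq_abs, Complex.norm_real, Real.norm_eq_abs] at hlow
      have q1 : |a11 - a21| = x + y := by
        rw [← Real.sqrt_sq_eq_abs, show (a11-a21)^2 = (x+y)^2 by
          linear_combination e11 + e21 - 2*ha]
        rw [Real.sqrt_sq (by positivity)]
      have q2 : |a12 - a22| = |u - v| := by
        rw [← Real.sqrt_sq_eq_abs, ← Real.sqrt_sq_eq_abs]
        congr 1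
        linear_combination e12 + e22 - 2*hb
      rw [q1, q2] at hlow
      rcases le_total v u with hvu | huv
      · have habs : |u - v| = u - v := abs_of_nonneg (by linarith)
        rw [habs] at hlow hC
        have hk := keyB hv hvu hx hy (by linarith [hprod]) hC
        have hlow' : u - v + (x + y) ≤ ‖T‖ := by linarith
        refine rpow_finish hsum0 (by linarith) ?_ hlow'
        linarith [hk]
      · have habs : |u - v| = v - u := by
          rw [abs_sub_comm]; exact abs_of_nonneg (by linarith)
        rw [habs] at hlow hC
        have hk := keyB hu huv hx hy (by linarith [hprod]) hC
        have hlow' : v - u + (x + y) ≤ ‖T‖ := by linarith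
        refine rpow_finish hsum0 (by linarith) ?_ hlow'
        linarith [hk]
    · -- interior point
      push_neg at hB hC
      have hb1 := abs_lt.1 hB
      have hb2 := abs_lt.1 hC
      have hxy2 : (x-y)^2 < (u+v)^2 := sq_lt_sq' (by linarith [hb1.1]) hb1.2
      have huv2 : (u-v)^2 < (x+y)^2 := sq_lt_sq' (by linarith [hb2.1]) hb2.2
      have hxy0 : (0:ℝ) < 4*(x*y) := by positivity
      set c := (x^2+y^2-u^2-v^2)/(4*(x*y)) with hcd
      have hc4 : (4*(x*y))*c = x^2+y^2-u^2-v^2 := by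
        rw [hcd]; field_simp
      have hc1 : c ≤ 1 := by
        rw [hcd]
        rw [div_le_one hxy0]
        nlinarith [hxy2, hprod]
      have hcm1 : -1 ≤ c := by
        rw [hcd]
        rw [le_div_iff₀ hxy0]
        nlinarith [huv2, hprod]
      clear_value c
      have h1c : 0 ≤ 1 - c^2 := by nlinarith
      set s := Real.sqrt (1 - c^2) with hsd
      have hs0 : 0 ≤ s := Real.sqrt_nonneg _
      have hs2 : s^2 = 1 - c^2 := Real.sq_sqrt h1c
      clear_value s
      have hz1 : ‖(c:ℂ) + (s:ℂ)*Complex.I‖ ≤ 1 := by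
        rw [Complex.norm_add_mul_I, show c^2 + s^2 = 1 by linarith, Real.sqrt_one]
      have hlow := lower hT 1 ((c:ℂ) + (s:ℂ)*Complex.I) (by simp) hz1
      have ea : (a11:ℂ)*1 + (a21:ℂ)*((c:ℂ) + (s:ℂ)*Complex.I)
          = ((a11 + a21*c : ℝ):ℂ) + ((a21*s : ℝ):ℂ)*Complex.I := by push_cast; ring
      have eb : (a12:ℂ)*1 + (a22:ℂ)*((c:ℂ) + (s:ℂ)*Complex.I)
          = ((a12 + a22*c : ℝ):ℂ) + ((a22*s : ℝ):ℂ)*Complex.I := by push_cast; ring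
      rw [ea, eb, Complex.norm_add_mul_I, Complex.norm_add_mul_I] at hlow
      have er1 : (a11 + a21*c)^2 + (a21*s)^2 = (x^2+y^2+u^2+v^2)/2 := by
        have expand : (a11 + a21*c)^2 + (a21*s)^2 = a11^2 + a21^2 + 2*(a11*a21)*c := by
          linear_combination a21^2 * hs2
        rw [expand, e11, e21, ha]
        linarith [hc4]
      have er2 : (a12 + a22*c)^2 + (a22*s)^2 = (x^2+y^2+u^2+v^2)/2 := by
        have expand : (a12 + a22*c)^2 + (a22*s)^2 = a12^2 + a22^2 + 2*(a12*a22)*c := by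
          linear_combination a22^2 * hs2
        rw [expand, e12, e22, hb, ← hprod]
        linarith [hc4]
      rw [er1, er2] at hlow
      have hk := keyA hx.le hy.le hu.le hv.le
      have esq : Real.sqrt (2*(x^2+y^2+u^2+v^2))
          = Real.sqrt ((x^2+y^2+u^2+v^2)/2) + Real.sqrt ((x^2+y^2+u^2+v^2)/2) := by
        rw [show (2:ℝ)*(x^2+y^2+u^2+v^2) = 2^2*((x^2+y^2+u^2+v^2)/2) by ring,
          Real.sqrt_mul (by positivity) _, Real.sqrt_sq (by norm_num : (0:ℝ) ≤ 2)]
        ring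
      rw [esq] at hk
      refine rpow_finish hsum0 (by positivity) ?_ hlow
      linarith [hk]
end

section
/- Let α ∈ ℝ, α ≠ 0. Then each of the bilinear forms T : ℓ∞²(ℂ) × ℓ∞²(ℂ) → ℂ given by T(z,w) = α(z₁w₁ + z₁w₂ + z₂w₁ − z₂w₂), T(z,w) = α(z₁w₁ + z₁w₂ − z₂w₁ + z₂w₂), T(z,w) = α(z₁w₁ − z₁w₂ + z₂w₁ + z₂w₂), and T(z,w) = α(−z₁w₁ + z₁w₂ + z₂w₁ + z₂w₂), satisfies (Σ_{i,j=1}^{2} |T(e_i,e_j)|^{4/3})^{3/4} = ‖T‖, where e₁, e₂ are the standard basis vectors of ℂ². -/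
private lemma lw_aux1 (u v : ℂ) (W : ℝ) (hW : 0 ≤ W) (h : ‖u‖^2+‖v‖^2 ≤ 4*W^2) :
    ‖u‖+‖v‖ ≤ 2*Real.sqrt 2*W := by
  have hs : Real.sqrt 2^2 = 2 := Real.sq_sqrt (by norm_num)
  have h2 : (‖u‖+‖v‖)^2 ≤ (2*Real.sqrt 2*W)^2 := by nlinarith [sq_nonneg (‖u‖-‖v‖)]
  exact (pow_le_pow_iff_left₀ (by positivity) (by positivity) two_ne_zero).mp h2

private lemma lw_bound_s15 (α : ℝ) (a b u v : ℂ) (Z W : ℝ) (hW : 0 ≤ W)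
    (ha : ‖a‖ ≤ Z) (hb : ‖b‖ ≤ Z) (huv : ‖u‖^2 + ‖v‖^2 ≤ 4*W^2) :
    ‖(α:ℂ) * (a*u + b*v)‖ ≤ 2*Real.sqrt 2*|α| * Z * W := by
  have hZ : 0 ≤ Z := le_trans (norm_nonneg a) ha
  have h1 : ‖a*u + b*v‖ ≤ Z*(‖u‖+‖v‖) := by
    calc ‖a*u+b*v‖ ≤ ‖a*u‖+‖b*v‖ := norm_add_le _ _
    _ = ‖a‖*‖u‖+‖b‖*‖v‖ := by rw [norm_mul, norm_mul]
    _ ≤ Z*‖u‖+Z*‖v‖ := add_le_add (mul_le_mul_of_nonneg_right ha (norm_nonneg u))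
      (mul_le_mul_of_nonneg_right hb (norm_nonneg v))
    _ = Z*(‖u‖+‖v‖) := by ring
  have h2 := lw_aux1 u v W hW huv
  have h3 : ‖a*u+b*v‖ ≤ Z*(2*Real.sqrt 2*W) :=
    h1.trans (mul_le_mul_of_nonneg_left h2 hZ)
  rw [norm_mul, Complex.norm_real, Real.norm_eq_abs]
  calc (|α|) * ‖a*u+b*v‖ ≤ |α| * (Z*(2*Real.sqrt 2*W)) := mul_le_mul_of_nonneg_left h3 (abs_nonneg α)
  _ = 2 * Real.sqrt 2 * |α| * Z * W := by ring

private lemma lw_par (w : Fin 2 → ℂ) : ‖w 0 + w 1‖^2 + ‖w 0 - w 1‖^2 ≤ 4*‖w‖^2 := by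
  have h := parallelogram_law_with_norm ℂ (w 0) (w 1)
  have h0 := norm_le_pi_norm w 0
  have h1 := norm_le_pi_norm w 1
  have := norm_nonneg w
  nlinarith [norm_nonneg (w 0), norm_nonneg (w 1)]

private lemma lw_lb (α : ℝ) (T : (Fin 2 → ℂ) →L[ℂ] (Fin 2 → ℂ) →L[ℂ] ℂ)
    (z w : Fin 2 → ℂ) (hz : ‖z‖ ≤ Real.sqrt 2) (hw : ‖w‖ ≤ 1)
    (hval : ‖T z w‖ = 4*|α|) : 2*Real.sqrt 2*|α| ≤ ‖T‖ := by
  have h := T.le_opNorm₂ z w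
  have hTn : 0 ≤ ‖T‖ := norm_nonneg T
  have hs : Real.sqrt 2 * Real.sqrt 2 = 2 := Real.mul_self_sqrt (by norm_num)
  have key : 4*|α| ≤ ‖T‖ * Real.sqrt 2 := by
    calc 4*|α| = ‖T z w‖ := hval.symm
    _ ≤ ‖T‖*‖z‖*‖w‖ := h
    _ ≤ ‖T‖*Real.sqrt 2*1 := mul_le_mul (mul_le_mul_of_nonneg_left hz hTn) hw
      (norm_nonneg w) (by positivity)
    _ = ‖T‖*Real.sqrt 2 := by ring
  nlinarith [Real.sqrt_nonneg 2, mul_le_mul_of_nonneg_left key (Real.sqrt_nonneg 2)]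

private lemma lw_main (α : ℝ) (T : (Fin 2 → ℂ) →L[ℂ] (Fin 2 → ℂ) →L[ℂ] ℂ)
    (hub : ‖T‖ ≤ 2*Real.sqrt 2*|α|) (hlb : 2*Real.sqrt 2*|α| ≤ ‖T‖)
    (hone : ∀ i j : Fin 2, ‖T (Pi.single i 1) (Pi.single j 1)‖ = |α|) :
    (∑ i : Fin 2, ∑ j : Fin 2,
        ‖T (Pi.single i 1) (Pi.single j 1)‖ ^ ((4 : ℝ) / 3)) ^ ((3 : ℝ) / 4) = ‖T‖ := by
  have hnorm : ‖T‖ = 2*Real.sqrt 2*|α| := le_antisymm hub hlb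
  have hsum : (∑ i : Fin 2, ∑ j : Fin 2,
      ‖T (Pi.single i 1) (Pi.single j 1)‖ ^ ((4 : ℝ) / 3)) = 4 * |α| ^ ((4:ℝ)/3) := by
    simp only [Fin.sum_univ_two, hone]; ring
  rw [hsum, hnorm]
  rw [Real.mul_rpow (by norm_num) (Real.rpow_nonneg (abs_nonneg α) _)]
  have hA : (|α|^((4:ℝ)/3))^((3:ℝ)/4) = |α| := by
    rw [← Real.rpow_mul (abs_nonneg α)]; norm_num
  have h4 : (4:ℝ)^((3:ℝ)/4) = 2*Real.sqrt 2 := by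
    calc (4:ℝ)^((3:ℝ)/4) = ((2:ℝ)^(2:ℝ))^((3:ℝ)/4) := by norm_num [Real.rpow_two]
    _ = (2:ℝ)^((2:ℝ)*((3:ℝ)/4)) := (Real.rpow_mul (by norm_num) _ _).symm
    _ = (2:ℝ)^((1:ℝ)+1/2) := by norm_num
    _ = (2:ℝ)^(1:ℝ) * (2:ℝ)^((1:ℝ)/2) := Real.rpow_add (by norm_num) _ _
    _ = 2*Real.sqrt 2 := by rw [Real.rpow_one, Real.sqrt_eq_rpow]
  rw [hA, h4]

private lemma lw_n1 : ‖(1:ℂ)-Complex.I‖ = Real.sqrt 2 := by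
  rw [Complex.norm_def, Complex.normSq_apply]; norm_num
private lemma lw_n2 : ‖(1:ℂ)+Complex.I‖ = Real.sqrt 2 := by
  rw [Complex.norm_def, Complex.normSq_apply]; norm_num
private lemma lw_n3 : ‖(-1:ℂ)-Complex.I‖ = Real.sqrt 2 := by
  rw [Complex.norm_def, Complex.normSq_apply]; norm_num
private lemma lw_nI : ‖Complex.I‖ = 1 := by simp

/-- For nonzero real `α`, each of the four complex bilinear forms
`α(±z₁w₁ ± z₁w₂ ± z₂w₁ ± z₂w₂)` on `ℓ∞²(ℂ)` with exactly one minus sign attains equality in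
Littlewood's 4/3 inequality with constant 1: `(Σ |T(eᵢ,eⱼ)|^(4/3))^(3/4) = ‖T‖`. -/
theorem littlewood_43_linf2_complex_equality_forms
    (α : ℝ) (hα : α ≠ 0)
    (T : (Fin 2 → ℂ) →L[ℂ] (Fin 2 → ℂ) →L[ℂ] ℂ)
    (hT : (∀ z w : Fin 2 → ℂ,
          T z w = (α : ℂ) * (z 0 * w 0 + z 0 * w 1 + z 1 * w 0 - z 1 * w 1))
      ∨ (∀ z w : Fin 2 → ℂ,
          T z w = (α : ℂ) * (z 0 * w 0 + z 0 * w 1 - z 1 * w 0 + z 1 * w 1))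
      ∨ (∀ z w : Fin 2 → ℂ,
          T z w = (α : ℂ) * (z 0 * w 0 - z 0 * w 1 + z 1 * w 0 + z 1 * w 1))
      ∨ (∀ z w : Fin 2 → ℂ,
          T z w = (α : ℂ) * (-(z 0 * w 0) + z 0 * w 1 + z 1 * w 0 + z 1 * w 1))) :
    (∑ i : Fin 2, ∑ j : Fin 2,
        ‖T (Pi.single i 1) (Pi.single j 1)‖ ^ ((4 : ℝ) / 3)) ^ ((3 : ℝ) / 4) = ‖T‖ := by
  have hw1 : ‖(![1, Complex.I] : Fin 2 → ℂ)‖ ≤ 1 := by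
    rw [pi_norm_le_iff_of_nonneg (by norm_num)]
    intro i; fin_cases i <;> simp
  rcases hT with h | h | h | h
  · apply lw_main
    · apply ContinuousLinearMap.opNorm_le_bound _ (by positivity); intro z
      apply ContinuousLinearMap.opNorm_le_bound _ (by positivity); intro w
      rw [h z w, show (α:ℂ)*(z 0*w 0 + z 0*w 1 + z 1*w 0 - z 1*w 1)
          = (α:ℂ)*(z 0*(w 0 + w 1) + z 1*(w 0 - w 1)) from by ring]
      exact lw_bound_s15 α (z 0) (z 1) _ _ ‖z‖ ‖w‖ (norm_nonneg w)
        (norm_le_pi_norm z 0) (norm_le_pi_norm z 1) (lw_par w)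
    · apply lw_lb α T ![1-Complex.I, 1+Complex.I] ![1, Complex.I]
      · rw [pi_norm_le_iff_of_nonneg (Real.sqrt_nonneg 2)]
        intro i; fin_cases i <;> simp only [Matrix.cons_val_zero, Matrix.cons_val_one, Matrix.head_cons] <;>
          first | exact le_of_eq lw_n1 | exact le_of_eq lw_n2 | exact le_of_eq lw_n3
      · exact hw1
      · rw [h]
        simp only [Matrix.cons_val_zero, Matrix.cons_val_one, Matrix.head_cons]
        rw [show (1-Complex.I)*1 + (1-Complex.I)*Complex.I + (1+Complex.I)*1
            - (1+Complex.I)*Complex.I = 4 from by ring_nf; simp [Complex.I_sq]; ring]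
        rw [norm_mul, Complex.norm_real]
        simp [Real.norm_eq_abs]; ring
    · intro i j
      rw [h]
      fin_cases i <;> fin_cases j <;> simp [Pi.single_apply, Complex.norm_real]
  · apply lw_main
    · apply ContinuousLinearMap.opNorm_le_bound _ (by positivity); intro z
      apply ContinuousLinearMap.opNorm_le_bound _ (by positivity); intro w
      rw [h z w, show (α:ℂ)*(z 0*w 0 + z 0*w 1 - z 1*w 0 + z 1*w 1)
          = (α:ℂ)*(z 0*(w 0 + w 1) + z 1*(w 1 - w 0)) from by ring]
      refine lw_bound_s15 α (z 0) (z 1) _ _ ‖z‖ ‖w‖ (norm_nonneg w)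
        (norm_le_pi_norm z 0) (norm_le_pi_norm z 1) ?_
      rw [norm_sub_rev]; exact lw_par w
    · apply lw_lb α T ![1-Complex.I, -1-Complex.I] ![1, Complex.I]
      · rw [pi_norm_le_iff_of_nonneg (Real.sqrt_nonneg 2)]
        intro i; fin_cases i <;> simp only [Matrix.cons_val_zero, Matrix.cons_val_one, Matrix.head_cons] <;>
          first | exact le_of_eq lw_n1 | exact le_of_eq lw_n2 | exact le_of_eq lw_n3
      · exact hw1
      · rw [h]
        simp only [Matrix.cons_val_zero, Matrix.cons_val_one, Matrix.head_cons]
        rw [show (1-Complex.I)*1 + (1-Complex.I)*Complex.I - (-1-Complex.I)*1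
            + (-1-Complex.I)*Complex.I = 4 from by ring_nf; simp [Complex.I_sq]; ring]
        rw [norm_mul, Complex.norm_real]
        simp [Real.norm_eq_abs]; ring
    · intro i j
      rw [h]
      fin_cases i <;> fin_cases j <;> simp [Pi.single_apply, Complex.norm_real]
  · apply lw_main
    · apply ContinuousLinearMap.opNorm_le_bound _ (by positivity); intro z
      apply ContinuousLinearMap.opNorm_le_bound _ (by positivity); intro w
      rw [h z w, show (α:ℂ)*(z 0*w 0 - z 0*w 1 + z 1*w 0 + z 1*w 1)
          = (α:ℂ)*(z 0*(w 0 - w 1) + z 1*(w 0 + w 1)) from by ring]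
      refine lw_bound_s15 α (z 0) (z 1) _ _ ‖z‖ ‖w‖ (norm_nonneg w)
        (norm_le_pi_norm z 0) (norm_le_pi_norm z 1) ?_
      linarith [lw_par w]
    · apply lw_lb α T ![1+Complex.I, 1-Complex.I] ![1, Complex.I]
      · rw [pi_norm_le_iff_of_nonneg (Real.sqrt_nonneg 2)]
        intro i; fin_cases i <;> simp only [Matrix.cons_val_zero, Matrix.cons_val_one, Matrix.head_cons] <;>
          first | exact le_of_eq lw_n1 | exact le_of_eq lw_n2 | exact le_of_eq lw_n3
      · exact hw1
      · rw [h]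
        simp only [Matrix.cons_val_zero, Matrix.cons_val_one, Matrix.head_cons]
        rw [show (1+Complex.I)*1 - (1+Complex.I)*Complex.I + (1-Complex.I)*1
            + (1-Complex.I)*Complex.I = 4 from by ring_nf; simp [Complex.I_sq]; ring]
        rw [norm_mul, Complex.norm_real]
        simp [Real.norm_eq_abs]; ring
    · intro i j
      rw [h]
      fin_cases i <;> fin_cases j <;> simp [Pi.single_apply, Complex.norm_real]
  · apply lw_main
    · apply ContinuousLinearMap.opNorm_le_bound _ (by positivity); intro z
      apply ContinuousLinearMap.opNorm_le_bound _ (by positivity); intro w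
      rw [h z w, show (α:ℂ)*(-(z 0*w 0) + z 0*w 1 + z 1*w 0 + z 1*w 1)
          = (α:ℂ)*(z 0*(w 1 - w 0) + z 1*(w 0 + w 1)) from by ring]
      refine lw_bound_s15 α (z 0) (z 1) _ _ ‖z‖ ‖w‖ (norm_nonneg w)
        (norm_le_pi_norm z 0) (norm_le_pi_norm z 1) ?_
      rw [norm_sub_rev]; linarith [lw_par w]
    · apply lw_lb α T ![-1-Complex.I, 1-Complex.I] ![1, Complex.I]
      · rw [pi_norm_le_iff_of_nonneg (Real.sqrt_nonneg 2)]
        intro i; fin_cases i <;> simp only [Matrix.cons_val_zero, Matrix.cons_val_one, Matrix.head_cons] <;>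
          first | exact le_of_eq lw_n1 | exact le_of_eq lw_n2 | exact le_of_eq lw_n3
      · exact hw1
      · rw [h]
        simp only [Matrix.cons_val_zero, Matrix.cons_val_one, Matrix.head_cons]
        rw [show -((-1-Complex.I)*1) + (-1-Complex.I)*Complex.I + (1-Complex.I)*1
            + (1-Complex.I)*Complex.I = 4 from by ring_nf; simp [Complex.I_sq]; ring]
        rw [norm_mul, Complex.norm_real]
        simp [Real.norm_eq_abs]; ring
    · intro i j
      rw [h]
      fin_cases i <;> fin_cases j <;> simp [Pi.single_apply, Complex.norm_real]
end

section
/- Let a, b, c > 0 and d < 0 be real numbers. Then |(ab/(cd))²(c² + d²) − (a² + b²)| ≤ 2ab(1 − ab/(cd)) if and only if both |(cd/(ab))·(a − b)| ≤ c − d and |(ab/(cd))·(c + d)| ≤ a + b. -/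
set_option maxHeartbeats 1000000

/-- For `a, b, c > 0` and `d < 0`:
`|(ab/(cd))²(c² + d²) − (a² + b²)| ≤ 2ab(1 − ab/(cd))` iff
`|(cd/(ab))(a − b)| ≤ c − d` and `|(ab/(cd))(c + d)| ≤ a + b`. -/
theorem lemma_tec01 (a b c d : ℝ) (ha : 0 < a) (hb : 0 < b) (hc : 0 < c) (hd : d < 0) :
    |(a * b / (c * d)) ^ 2 * (c ^ 2 + d ^ 2) - (a ^ 2 + b ^ 2)|
        ≤ 2 * a * b * (1 - a * b / (c * d))
      ↔ (|c * d / (a * b) * (a - b)| ≤ c - d ∧ |a * b / (c * d) * (c + d)| ≤ a + b) := by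
  have hcd : c * d < 0 := mul_neg_of_pos_of_neg hc hd
  have hab : 0 < a * b := mul_pos ha hb
  have ht : a * b / (c * d) * (c * d) = a * b := div_mul_cancel₀ _ (ne_of_lt hcd)
  have htneg : a * b / (c * d) < 0 := div_neg_of_pos_of_neg hab hcd
  have hsneg : c * d / (a * b) < 0 := div_neg_of_neg_of_pos hcd hab
  have ht2 : (a * b / (c * d)) ^ 2 * (c * d) = (a * b / (c * d)) * (a * b) := by
    rw [sq, mul_assoc, ht]
  have hst2 : c * d / (a * b) * (a * b / (c * d) * (c - d)) = c - d := by
    field_simp [hab.ne', hcd.ne, hd.ne, hc.ne']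
  have hst3 : a * b / (c * d) * (c * d / (a * b) * (a - b)) = a - b := by
    field_simp [hab.ne', hcd.ne, hd.ne, hc.ne']
  have hpos : (0:ℝ) ≤ -(a * b / (c * d) * (c - d)) := by nlinarith
  rw [abs_le, abs_le, abs_le]
  constructor
  · rintro ⟨h1, h2⟩
    have hsq1 : (a - b) ^ 2 ≤ (-(a * b / (c * d) * (c - d))) ^ 2 := by nlinarith [ht2]
    obtain ⟨hl, hu⟩ := abs_le_of_sq_le_sq' hsq1 hpos
    refine ⟨⟨?_, ?_⟩, ?_, ?_⟩
    · have := mul_le_mul_of_nonpos_left hu (le_of_lt hsneg)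
      linarith [hst2]
    · have := mul_le_mul_of_nonpos_left hl (le_of_lt hsneg)
      linarith [hst2]
    · nlinarith [sq_nonneg (a*b/(c*d)*(c+d) + (a+b)), sq_nonneg (a*b/(c*d)*(c+d) - (a+b))]
    · nlinarith [sq_nonneg (a*b/(c*d)*(c+d) + (a+b)), sq_nonneg (a*b/(c*d)*(c+d) - (a+b))]
  · rintro ⟨⟨h1, h2⟩, h3, h4⟩
    have g1 : a - b ≤ -(a * b / (c * d) * (c - d)) := by
      have := mul_le_mul_of_nonpos_left h1 (le_of_lt htneg)
      linarith [hst3]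
    have g2 : a * b / (c * d) * (c - d) ≤ a - b := by
      have := mul_le_mul_of_nonpos_left h2 (le_of_lt htneg)
      linarith [hst3]
    constructor
    · nlinarith [mul_nonneg (by linarith : (0:ℝ) ≤ a + b - a*b/(c*d)*(c+d))
        (by linarith : (0:ℝ) ≤ a + b + a*b/(c*d)*(c+d)), ht2]
    · nlinarith [mul_nonneg (by linarith : (0:ℝ) ≤ -(a*b/(c*d)*(c-d)) - (a - b))
        (by linarith : (0:ℝ) ≤ -(a*b/(c*d)*(c-d)) + (a - b)), ht2]
end
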